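/- arXiv:2409.18629 — 2 statements merged into one kernel-verified Lean document; each statement's English description precedes it below -/
import Mathlib

section
/- Let q ∈ (1,∞)∖{2}, C > 0 and M > 0. For every ε > 0 there exists Δt₀ > 0, depending only on q, C, M and ε, with the following property: for every mesh size h > 0, integer M_x ≥ 1, nonnegative symmetric summable weights (w_j)_{j≠0} such that C satisfies the discrete Poincaré–Sobolev inequality for exponent q, every initial data u⁰ supported in {|i| ≤ M_x} with u⁰ not identically zero and ‖u⁰‖_{ℓ^q_h} ≤ M, every time step Δt ∈ (0, Δt₀), and every n ∈ ℕ, the solution (uⁿ) of the fully discrete implicit scheme (FD) satisfies ‖uⁿ‖_{ℓ^q_h} ≤ (‖u⁰‖_{ℓ^q_h}^{−(2−q)} + ((2−q)/(q−1)) C^{−2} n Δt)_+^{−1/(2−q)} + ε, where a_+ := max(a,0) and, when q > 2 (so that −1/(2−q) = 1/(q−2) > 0), the expression a_+^{−1/(2−q)} is interpreted as (a_+)^{1/(q−2)}, equal to 0 when a ≤ 0. -/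
open scoped BigOperators ENNReal

noncomputable def opow (x r : ℝ) : ℝ := |x| ^ (r - 1) * x

noncomputable def discLap (w u : ℤ → ℝ) (i : ℤ) : ℝ :=
  ∑' j : ℤ, if j = 0 then 0 else w j * (u i - u (i - j))

noncomputable def lqNorm (h q : ℝ) (u : ℤ → ℝ) : ℝ :=
  (∑' i : ℤ, h * |u i| ^ q) ^ (1 / q)

noncomputable def energyNorm (h : ℝ) (w u : ℤ → ℝ) : ℝ :=
  Real.sqrt ((1 / 2) * ∑' i : ℤ, ∑' j : ℤ, if j = 0 then 0 else h * w j * (u i - u (i - j)) ^ 2)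

/-- The fully discrete implicit scheme (FD). -/
def IsFD (q Δt : ℝ) (w : ℤ → ℝ) (Mx : ℤ) (u0 : ℤ → ℝ) (u : ℕ → ℤ → ℝ) : Prop :=
  u 0 = u0 ∧
  (∀ n : ℕ, ∀ i : ℤ, Mx < |i| → u n i = 0) ∧
  (∀ n : ℕ, ∀ i : ℤ, |i| ≤ Mx →
    (opow (u (n + 1) i) (q - 1) - opow (u n i) (q - 1)) / Δt + discLap w (u (n + 1)) i = 0)

/-- A solution of the semi-discrete scheme (SD) with initial data `u0`. -/
def IsSD (q : ℝ) (w : ℤ → ℝ) (Mx : ℤ) (u0 : ℤ → ℝ) (v : ℤ → ℝ → ℝ) : Prop :=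
  (∀ i : ℤ, ContinuousOn (v i) (Set.Ici 0)) ∧
  (∀ i : ℤ, Mx < |i| → ∀ t : ℝ, 0 ≤ t → v i t = 0) ∧
  (∀ i : ℤ, v i 0 = u0 i) ∧
  (∀ i : ℤ, |i| ≤ Mx → ∀ t : ℝ, 0 ≤ t →
    opow (v i t) (q - 1) = opow (u0 i) (q - 1) - ∫ s in (0:ℝ)..t, discLap w (fun k => v k s) i)

/-- `C` satisfies the discrete Poincaré–Sobolev inequality for exponent `q`. -/
def PSConst (h q C : ℝ) (w : ℤ → ℝ) (Mx : ℤ) : Prop :=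
  ∀ f : ℤ → ℝ, (∀ i : ℤ, Mx < |i| → f i = 0) → lqNorm h q f ≤ C * energyNorm h w f

namespace Stmt13Aux
open Real

/-- Bernoulli for nonpositive exponents via weighted AM-GM. -/
lemma bern_neg {t c : ℝ} (ht : 0 < t) (hc : c ≤ 0) : 1 + c * (t - 1) ≤ t ^ c := by
  set d := -c with hdc
  have hd0 : 0 ≤ d := by rw [hdc]; linarith
  have hd1 : 0 < 1 + d := by linarith
  have hsum : 1/(1+d) + d/(1+d) = 1 := by field_simp
  have hg := Real.geom_mean_le_arith_mean2_weighted (w₁ := 1/(1+d)) (w₂ := d/(1+d))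
      (p₁ := t ^ (-d)) (p₂ := t) (by positivity) (by positivity)
      (Real.rpow_nonneg ht.le _) ht.le hsum
  have key : (t ^ (-d)) ^ (1/(1+d)) * t ^ (d/(1+d)) = 1 := by
    rw [← Real.rpow_mul ht.le, ← Real.rpow_add ht]
    have he : -d * (1/(1+d)) + d/(1+d) = 0 := by field_simp; ring
    rw [he, Real.rpow_zero]
  rw [key] at hg
  have h3 : (1:ℝ) + d ≤ t^(-d) + d*t := by
    rw [div_mul_eq_mul_div, div_mul_eq_mul_div, ← add_div, le_div_iff₀ hd1] at hg
    linarith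
  have hcd : c = -d := by rw [hdc]; ring
  rw [hcd]
  nlinarith [h3]

/-- Bernoulli for exponents ≥ 1. -/
lemma bern_ge_one {t c : ℝ} (ht : 0 ≤ t) (hc : 1 ≤ c) : 1 + c * (t - 1) ≤ t ^ c := by
  have := one_add_mul_self_le_rpow_one_add (s := t - 1) (by linarith) hc
  simpa using this

/-- Bernoulli reverse for exponents in [0,1]. -/
lemma bern_le_one {t c : ℝ} (ht : 0 ≤ t) (hc0 : 0 ≤ c) (hc1 : c ≤ 1) : t ^ c ≤ 1 + c * (t - 1) := by
  have := rpow_one_add_le_one_add_mul_self (s := t - 1) (by linarith) hc0 hc1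
  simpa using this

/-- second order upper bound for (1+θ)^c, c ≤ 0. -/
lemma expand_neg {c θ : ℝ} (hc : c ≤ 0) (hθ : 0 ≤ θ) :
    (1 + θ) ^ c ≤ 1 + c * θ + (-c + c^2) * θ^2 := by
  have h1θ : (0:ℝ) < 1 + θ := by linarith
  set s : ℝ := -c * θ / (1 + θ) with hs
  have hs0 : 0 ≤ s := by
    apply div_nonneg _ h1θ.le
    exact mul_nonneg (by linarith) hθ
  have hstep : 1 + s ≤ (1 + θ) ^ (-c) := by
    have hb := bern_neg (t := (1+θ)⁻¹) (c := c) (by positivity) hc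
    rw [Real.inv_rpow h1θ.le, ← Real.rpow_neg h1θ.le] at hb
    have harg : 1 + c * ((1+θ)⁻¹ - 1) = 1 + s := by
      rw [hs]; field_simp; ring
    rw [harg] at hb; exact hb
  have hpos : (0:ℝ) < (1+θ)^(-c) := Real.rpow_pos_of_pos h1θ _
  have hinv : (1 + θ)^c = ((1+θ)^(-c))⁻¹ := by
    rw [← Real.rpow_neg h1θ.le]; norm_num
  have h2 : (1+θ)^c ≤ (1+s)⁻¹ := by
    rw [hinv]
    exact inv_anti₀ (by linarith) hstep
  have h3 : (1+s)⁻¹ ≤ 1 - s + s^2 := by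
    rw [inv_le_iff_one_le_mul₀ (by linarith)]
    nlinarith
  have e1 : -s ≤ c*θ + (-c)*θ^2 := by
    have : c*θ/(1+θ) ≤ c*θ + (-c)*θ^2 := by
      rw [div_le_iff₀ h1θ]
      nlinarith [mul_nonneg (mul_nonneg hθ hθ) hθ]
    have hns : -s = c*θ/(1+θ) := by rw [hs]; ring
    linarith [hns ▸ this]
  have e2 : s^2 ≤ c^2*θ^2 := by
    rw [hs, div_pow]
    have h1 : (0:ℝ) < (1+θ)^2 := by positivity
    rw [div_le_iff₀ h1]
    nlinarith [sq_nonneg (c*θ), sq_nonneg θ, mul_nonneg hθ hθ]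
  linarith

/-- second order lower bound for (1+θ)^c, 0 ≤ c ≤ 1. -/
lemma expand_pos {c θ : ℝ} (hc0 : 0 ≤ c) (hc1 : c ≤ 1) (hθ : 0 ≤ θ) :
    1 + c * θ - (1-c) * θ^2 ≤ (1 + θ) ^ c := by
  have h1θ : (0:ℝ) < 1 + θ := by linarith
  have hA : (1+θ)^(1-c) ≤ 1 + (1-c)*θ := by
    have := bern_le_one (t := 1+θ) (c := 1-c) h1θ.le (by linarith) (by linarith)
    simpa using this
  have hApos : (0:ℝ) < (1+θ)^(1-c) := Real.rpow_pos_of_pos h1θ _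
  have hsplit : (1+θ)^c = (1+θ) / (1+θ)^(1-c) := by
    rw [eq_div_iff hApos.ne', ← Real.rpow_add h1θ]
    norm_num
  rw [hsplit]
  have hden : (0:ℝ) < 1 + (1-c)*θ := by nlinarith
  have h5 : (1+θ)/(1+(1-c)*θ) ≤ (1+θ)/(1+θ)^(1-c) :=
    div_le_div_of_nonneg_left h1θ.le hApos hA
  refine le_trans ?_ h5
  rw [le_div_iff₀ hden]
  nlinarith [mul_nonneg (mul_nonneg (sq_nonneg (1-c)) (sq_nonneg θ)) hθ,
    mul_nonneg (sq_nonneg (1-c)) (sq_nonneg θ)]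

/-- gradient inequality for convex rpow with nonpositive exponent:
for 0 < a, 0 < b, c ≤ 0 : b^c - a^c ≤ (-c) * b^(c-1) * (a - b). -/
lemma grad_neg {a b c : ℝ} (ha : 0 < a) (hb : 0 < b) (hc : c ≤ 0) :
    b ^ c - a ^ c ≤ (-c) * b^(c-1) * (a - b) := by
  have h := bern_neg (t := a/b) (c := c) (div_pos ha hb) hc
  have hab : (a/b)^c = a^c / b^c := Real.div_rpow ha.le hb.le c
  rw [hab] at h
  have hbc : (0:ℝ) < b^c := Real.rpow_pos_of_pos hb _
  have hb1 : b^(c-1) = b^c / b := by rw [Real.rpow_sub hb, Real.rpow_one]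
  have h2 := mul_le_mul_of_nonneg_right h hbc.le
  rw [div_mul_cancel₀ _ hbc.ne'] at h2
  -- h2 : (1 + c*(a/b-1)) * b^c ≤ a^c
  rw [hb1]
  have hexp : (1 + c*(a/b-1)) * b^c = b^c + c * (b^c/b) * (a - b) := by
    field_simp
  rw [hexp] at h2
  linarith

/-- gradient inequality for convex rpow with exponent ≥ 1. -/
lemma grad_conv {b ρ γ : ℝ} (hb : 0 ≤ b) (hρ : 0 < ρ) (hγ : 1 ≤ γ) :
    (b+ρ)^γ - b^γ ≤ γ * (b+ρ)^(γ-1) * ρ := by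
  have hbρ : 0 < b + ρ := by linarith
  have h := bern_ge_one (t := b/(b+ρ)) (c := γ) (by positivity) hγ
  have hab : (b/(b+ρ))^γ = b^γ / (b+ρ)^γ := Real.div_rpow hb hbρ.le γ
  rw [hab] at h
  have hbc : (0:ℝ) < (b+ρ)^γ := Real.rpow_pos_of_pos hbρ _
  have h2 := mul_le_mul_of_nonneg_right h hbc.le
  rw [div_mul_cancel₀ _ hbc.ne'] at h2
  have hb1 : (b+ρ)^(γ-1) = (b+ρ)^γ / (b+ρ) := by rw [Real.rpow_sub hbρ, Real.rpow_one]
  rw [hb1]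
  have hexp : (1 + γ*(b/(b+ρ)-1)) * (b+ρ)^γ = (b+ρ)^γ - γ * ((b+ρ)^γ/(b+ρ)) * ρ := by
    field_simp
    ring
  rw [hexp] at h2
  linarith

/-- subadditivity of rpow for exponents in (0,1]. -/
lemma rpow_subadd {x y p : ℝ} (hx : 0 ≤ x) (hy : 0 ≤ y) (hp0 : 0 < p) (hp1 : p ≤ 1) :
    (x+y)^p ≤ x^p + y^p := by
  rcases eq_or_lt_of_le (add_nonneg hx hy) with h0 | hxy
  · have hx0 : x = 0 := by linarith
    have hy0 : y = 0 := by linarith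
    simp [hx0, hy0, Real.zero_rpow hp0.ne']
  · have hsx : x^p = (x/(x+y))^p * (x+y)^p := by
      rw [← Real.mul_rpow (by positivity) (by positivity), div_mul_cancel₀ _ hxy.ne']
    have hsy : y^p = (y/(x+y))^p * (x+y)^p := by
      rw [← Real.mul_rpow (by positivity) (by positivity), div_mul_cancel₀ _ hxy.ne']
    have key : ∀ z : ℝ, 0 ≤ z → z ≤ x + y → z/(x+y) ≤ (z/(x+y))^p := by
      intro z hz hzxy
      rcases eq_or_lt_of_le hz with h | h
      · rw [← h]
        simp only [zero_div]
        rw [Real.zero_rpow hp0.ne']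
      · calc z/(x+y) = (z/(x+y))^(1:ℝ) := (Real.rpow_one _).symm
          _ ≤ (z/(x+y))^p := Real.rpow_le_rpow_of_exponent_ge (by positivity)
              ((div_le_one hxy).mpr hzxy) hp1
    have h1 := key x hx (by linarith)
    have h2 := key y hy (by linarith)
    have hpos : (0:ℝ) < (x+y)^p := Real.rpow_pos_of_pos hxy _
    have hsum : x/(x+y) + y/(x+y) = 1 := by field_simp
    rw [hsx, hsy]
    nlinarith [mul_le_mul_of_nonneg_right
      (by linarith : (1:ℝ) ≤ (x/(x+y))^p + (y/(x+y))^p) hpos.le]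


lemma lq_eq {h q : ℝ} (hq : q ≠ 0) {S : Finset ℤ} {v : ℤ → ℝ} (hv : ∀ i ∉ S, v i = 0) :
    lqNorm h q v = (∑ i ∈ S, h * |v i| ^ q) ^ (1/q) := by
  rw [lqNorm, tsum_eq_sum]
  intro i hi
  rw [hv i hi]
  simp [Real.zero_rpow hq]

lemma sum_discLap_eq_energy {h : ℝ} (hh : 0 ≤ h) {w : ℤ → ℝ} (hw : ∀ j, 0 ≤ w j)
    (hws : Summable w) {S : Finset ℤ} {v : ℤ → ℝ} (hv : ∀ i ∉ S, v i = 0) :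
    ∑ i ∈ S, h * v i * discLap w v i = energyNorm h w v ^ 2 := by
  classical
  set Bv : ℝ := ∑ k ∈ S, |v k| with hBvdef
  have hBv0 : 0 ≤ Bv := Finset.sum_nonneg fun k _ => abs_nonneg _
  have hB : ∀ m, |v m| ≤ Bv := by
    intro m
    by_cases hm : m ∈ S
    · exact Finset.single_le_sum (f := fun k => |v k|) (fun k _ => abs_nonneg (v k)) hm
    · rw [hv m hm]; simpa using hBv0
  set V : ℝ := ∑ i ∈ S, (v i)^2 with hVdef
  have hV0 : 0 ≤ V := Finset.sum_nonneg fun k _ => sq_nonneg _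
  set cJ : ℤ → ℝ := fun j => ∑ i ∈ S, v i * v (i - j) with hcJdef
  have hcJb : ∀ j, |cJ j| ≤ Bv * Bv := by
    intro j
    calc |cJ j| ≤ ∑ i ∈ S, |v i * v (i - j)| := Finset.abs_sum_le_sum_abs _ _
      _ ≤ ∑ i ∈ S, |v i| * Bv := by
          apply Finset.sum_le_sum
          intro i _
          rw [abs_mul]
          exact mul_le_mul_of_nonneg_left (hB _) (abs_nonneg _)
      _ = Bv * Bv := by rw [← Finset.sum_mul]
  have hdiff : ∀ i j : ℤ, |v i - v (i - j)| ≤ 2 * Bv := by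
    intro i j
    calc |v i - v (i - j)| ≤ |v i| + |v (i - j)| := abs_sub _ _
      _ ≤ 2 * Bv := by linarith [hB i, hB (i - j)]
  -- summability of the discLap series
  have sumf : ∀ i, Summable (fun j => if j = 0 then 0 else w j * (v i - v (i - j))) := by
    intro i
    apply Summable.of_norm_bounded (g := fun j => w j * (2*Bv)) (hws.mul_right _)
    intro j
    by_cases hj : j = 0
    · simp only [hj, if_pos]
      simp only [norm_zero]
      exact mul_nonneg (hw 0) (by linarith)
    · rw [if_neg hj, Real.norm_eq_abs, abs_mul, abs_of_nonneg (hw j)]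
      exact mul_le_mul_of_nonneg_left (hdiff i j) (hw j)
  set g : ℤ → ℤ → ℝ := fun i j => if j = 0 then 0 else h * w j * (v i - v (i - j)) ^ 2 with hgdef
  have hg0 : ∀ i j, 0 ≤ g i j := by
    intro i j
    rw [hgdef]
    dsimp only
    split
    · exact le_refl 0
    · exact mul_nonneg (mul_nonneg hh (hw j)) (sq_nonneg _)
  set T : ℤ → Finset ℤ := fun j => S ∪ S.image (fun x => x + j) with hTdef
  have hT : ∀ j i, i ∉ T j → v i = 0 ∧ v (i - j) = 0 := by
    intro j i hi
    rw [hTdef] at hi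
    dsimp only at hi
    rw [Finset.mem_union, not_or] at hi
    refine ⟨hv i hi.1, hv _ ?_⟩
    intro hmem
    exact hi.2 (Finset.mem_image.mpr ⟨i - j, hmem, by ring⟩)
  have hrow_fin : ∀ j, ∀ i ∉ T j, g i j = 0 := by
    intro j i hi
    rw [hgdef]
    dsimp only
    rw [(hT j i hi).1, (hT j i hi).2]
    simp
  have key_row : ∀ j, ∑' i, g i j = if j = 0 then 0 else h * w j * (2*V - 2*cJ j) := by
    intro j
    by_cases hj : j = 0
    · simp [hgdef, hj]
    · have e1 : ∀ i : ℤ, g i j = h * w j * (v i - v (i - j))^2 := by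
        intro i; rw [hgdef]; dsimp only; rw [if_neg hj]
      rw [if_neg hj, tsum_congr e1, tsum_mul_left]
      have e2 : ∑' i, (v i - v (i - j))^2 = 2*V - 2*cJ j := by
        rw [tsum_eq_sum (s := T j) (fun i hi => by rw [(hT j i hi).1, (hT j i hi).2]; ring)]
        have expand : ∀ i ∈ T j, (v i - v (i-j))^2
            = v i^2 - 2*(v i * v (i-j)) + v (i-j)^2 := fun i _ => by ring
        rw [Finset.sum_congr rfl expand, Finset.sum_add_distrib, Finset.sum_sub_distrib]
        have t1 : ∑ i ∈ T j, v i ^2 = V := by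
          rw [hVdef]
          exact (Finset.sum_subset Finset.subset_union_left
            (fun i _ hiS => by rw [hv i hiS]; ring)).symm
        have t2 : ∑ i ∈ T j, v i * v (i-j) = cJ j := by
          rw [hcJdef]
          exact (Finset.sum_subset Finset.subset_union_left
            (fun i _ hiS => by rw [hv i hiS]; ring)).symm
        have t3 : ∑ i ∈ T j, v (i-j)^2 = V := by
          rw [← tsum_eq_sum (L := SummationFilter.unconditional ℤ) (s := T j) (fun i hi => by rw [(hT j i hi).2]; ring)]
          have hre : ∑' (b : ℤ), v (b - j)^2 = ∑' k, v k ^ 2 := by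
            have := Equiv.tsum_eq (Equiv.subRight j) (fun k => v k ^ 2)
            simpa using this
          rw [hre, hVdef]
          exact tsum_eq_sum (fun i hi => by rw [hv i hi]; ring)
        have t2' : ∑ i ∈ T j, 2*(v i * v (i-j)) = 2 * cJ j := by
          rw [← Finset.mul_sum, t2]
        rw [t1, t2', t3]
        ring
      rw [e2]
  -- LHS = D
  set D : ℝ := ∑' j, (if j = 0 then 0 else h * w j * (V - cJ j)) with hDdef
  have hLHS : ∑ i ∈ S, h * v i * discLap w v i = D := by
    have step1 : ∀ i ∈ S, h * v i * discLap w v i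
        = ∑' j, (if j = 0 then 0 else h * v i * (w j * (v i - v (i - j)))) := by
      intro i _
      rw [discLap, ← tsum_mul_left]
      apply tsum_congr
      intro j
      by_cases hj : j = 0 <;> simp [hj]
    rw [Finset.sum_congr rfl step1, ← Summable.tsum_finsetSum (fun i _ => by
      apply Summable.congr ((sumf i).mul_left (h * v i))
      intro j
      by_cases hj : j = 0 <;> simp [hj])]
    rw [hDdef]
    apply tsum_congr
    intro j
    by_cases hj : j = 0
    · simp [hj]
    · simp only [if_neg hj]
      have expand : ∀ i ∈ S, h * v i * (w j * (v i - v (i - j)))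
          = h * w j * (v i^2) - h * w j * (v i * v (i - j)) := fun i _ => by ring
      rw [Finset.sum_congr rfl expand, Finset.sum_sub_distrib, ← Finset.mul_sum, ← Finset.mul_sum]
      rw [hVdef, hcJdef]
      ring
  -- RHS
  have hnn : 0 ≤ (1/2 : ℝ) * ∑' i, ∑' j, g i j :=
    mul_nonneg (by norm_num) (tsum_nonneg fun i => tsum_nonneg fun j => hg0 i j)
  have hRHS : energyNorm h w v ^ 2 = (1/2 : ℝ) * ∑' i, ∑' j, g i j := by
    rw [show energyNorm h w v = Real.sqrt ((1/2 : ℝ) * ∑' i, ∑' j, g i j) from rfl]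
    exact Real.sq_sqrt hnn
  -- summability of uncurried g
  have hrows : ∀ j, Summable fun i => g i j :=
    fun j => summable_of_ne_finset_zero (s := T j) (hrow_fin j)
  have hcols : ∀ i, Summable (g i) := by
    intro i
    apply Summable.of_norm_bounded (g := fun j => w j * (h * (2*Bv)^2)) (hws.mul_right _)
    intro j
    by_cases hj : j = 0
    · rw [hgdef]
      dsimp only
      rw [if_pos hj, norm_zero]
      exact mul_nonneg (hw j) (mul_nonneg hh (sq_nonneg _))
    · rw [hgdef]
      dsimp only
      rw [if_neg hj, Real.norm_eq_abs]
      have hd2 : (v i - v (i - j))^2 ≤ (2*Bv)^2 := by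
        have h1 := hdiff i j
        have h2 := abs_nonneg (v i - v (i - j))
        calc (v i - v (i - j))^2 = |v i - v (i - j)|^2 := (sq_abs _).symm
          _ ≤ (2*Bv)^2 := by nlinarith
      have habs : |h * w j * (v i - v (i - j))^2| = h * w j * (v i - v (i - j))^2 :=
        abs_of_nonneg (mul_nonneg (mul_nonneg hh (hw j)) (sq_nonneg _))
      rw [habs]
      have := mul_le_mul_of_nonneg_left hd2 (mul_nonneg hh (hw j))
      nlinarith [this]
  have hgprod : Summable (Function.uncurry g) := by
    have hswap : Summable (fun p : ℤ × ℤ => g p.2 p.1) := by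
      rw [summable_prod_of_nonneg (fun p => hg0 p.2 p.1)]
      constructor
      · intro j
        exact hrows j
      · apply Summable.of_nonneg_of_le (fun j => tsum_nonneg fun i => hg0 i j)
          (fun j => ?_) (hws.mul_right (h*(2*V + 2*(Bv*Bv))))
        rw [key_row j]
        by_cases hj : j = 0
        · rw [if_pos hj]
          exact mul_nonneg (hw j) (mul_nonneg hh (by nlinarith))
        · rw [if_neg hj]
          have h1 : 0 ≤ h * w j := mul_nonneg hh (hw j)
          have h2 := (abs_le.mp (hcJb j)).1
          nlinarith
    have hcomp := (Equiv.prodComm ℤ ℤ).summable_iff (f := fun p : ℤ×ℤ => g p.2 p.1)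
    exact hcomp.mpr hswap
  have hswap_eq : ∑' i, ∑' j, g i j = ∑' j, ∑' i, g i j :=
    (Summable.tsum_comm' hgprod hcols hrows).symm
  have hfinal : ∑' j, ∑' i, g i j = 2 * D := by
    rw [hDdef, ← tsum_mul_left]
    apply tsum_congr
    intro j
    rw [key_row j]
    by_cases hj : j = 0
    · simp [hj]
    · simp only [if_neg hj]; ring
  rw [hLHS, hRHS, hswap_eq, hfinal]
  ring


lemma opow_mul_self {q : ℝ} (hq : 1 < q) (a : ℝ) : opow a (q-1) * a = |a| ^ q := by
  rcases eq_or_ne a 0 with rfl | ha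
  · simp [opow, Real.zero_rpow (show q ≠ 0 by linarith)]
  · have h0 : 0 < |a| := abs_pos.mpr ha
    have e : opow a (q-1) * a = |a|^(q-1-1) * |a| * |a| := by
      have habs : a * a = |a| * |a| := (abs_mul_abs_self a).symm
      calc opow a (q-1) * a = |a|^(q-1-1) * (a*a) := by simp only [opow]; ring
        _ = |a|^(q-1-1) * (|a| * |a|) := by rw [habs]
        _ = |a|^(q-1-1) * |a| * |a| := by ring
    rw [e, ← Real.rpow_add_one h0.ne', ← Real.rpow_add_one h0.ne']
    have : q - 1 - 1 + 1 + 1 = q := by ring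
    rw [this]

lemma abs_opow {q : ℝ} (hq : 1 < q) (b : ℝ) : |opow b (q-1)| = |b| ^ (q-1) := by
  rcases eq_or_ne b 0 with rfl | hb
  · simp [opow, Real.zero_rpow (show q - 1 ≠ 0 by intro hcon; linarith)]
  · have h0 : 0 < |b| := abs_pos.mpr hb
    simp only [opow, abs_mul, abs_of_nonneg (Real.rpow_nonneg (abs_nonneg b) _)]
    rw [← Real.rpow_add_one h0.ne']
    congr 1
    ring

lemma pointwise_conv {q : ℝ} (hq : 1 < q) (a b : ℝ) :
    (1 - 1/q) * (|a|^q - |b|^q) ≤ (opow a (q-1) - opow b (q-1)) * a := by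
  have hq0 : (0:ℝ) < q := by linarith
  have hq1' : (0:ℝ) < q - 1 := by linarith
  have hpq : Real.HolderConjugate (q/(q-1)) q := by
    rw [Real.holderConjugate_iff]
    constructor
    · rw [lt_div_iff₀ hq1']; linarith
    · field_simp; ring
  have hyoung := Real.young_inequality_of_nonneg
    (Real.rpow_nonneg (abs_nonneg b) (q-1)) (abs_nonneg a) hpq
  have hbq : (|b|^(q-1))^(q/(q-1)) = |b|^q := by
    rw [← Real.rpow_mul (abs_nonneg b)]
    congr 1
    field_simp
  rw [hbq] at hyoung
  have hdiv : |b|^q / (q/(q-1)) = |b|^q - |b|^q/q := by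
    field_simp
  rw [hdiv] at hyoung
  -- hyoung : |b|^(q-1) * |a| ≤ (|b|^q - |b|^q/q) + |a|^q/q
  have h2 : opow b (q-1) * a ≤ |b|^(q-1) * |a| := by
    calc opow b (q-1) * a ≤ |opow b (q-1) * a| := le_abs_self _
      _ = |b|^(q-1) * |a| := by rw [abs_mul, abs_opow hq b]
  have h1 : opow a (q-1) * a = |a|^q := opow_mul_self hq a
  have e : (1 - 1/q) * (|a|^q - |b|^q) = (|a|^q - |a|^q/q) - (|b|^q - |b|^q/q) := by
    ring
  rw [e, show (opow a (q-1) - opow b (q-1)) * a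
    = opow a (q-1) * a - opow b (q-1) * a from sub_mul _ _ _, h1]
  linarith

lemma onestep {q C h Δt : ℝ} (hq1 : 1 < q) (hC : 0 < C) (hh : 0 < h) (hΔt : 0 < Δt)
    {w : ℤ → ℝ} (hw : ∀ j, 0 ≤ w j) (hws : Summable w) {Mx : ℤ}
    (hPS : PSConst h q C w Mx) {u0 : ℤ → ℝ} {u : ℕ → ℤ → ℝ} (hFD : IsFD q Δt w Mx u0 u)
    (n : ℕ) :
    (∑ i ∈ Finset.Icc (-Mx) Mx, h * |u (n+1) i| ^ q)
      + (q/((q-1)*C^2)) * Δt * ((∑ i ∈ Finset.Icc (-Mx) Mx, h * |u (n+1) i| ^ q)) ^ ((2:ℝ)/q)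
    ≤ ∑ i ∈ Finset.Icc (-Mx) Mx, h * |u n i| ^ q := by
  have hq0 : (0:ℝ) < q := by linarith
  have hq1' : (0:ℝ) < q - 1 := by linarith
  set S : Finset ℤ := Finset.Icc (-Mx) Mx with hSdef
  have hmemS : ∀ i : ℤ, i ∉ S ↔ Mx < |i| := by
    intro i
    rw [hSdef, Finset.mem_Icc, ← abs_le]
    exact not_le
  have hsupp : ∀ k : ℕ, ∀ i ∉ S, u k i = 0 := by
    intro k i hi
    exact hFD.2.1 k i ((hmemS i).mp hi)
  set a : ℤ → ℝ := u (n+1) with hadef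
  set b : ℤ → ℝ := u n with hbdef
  set P' : ℝ := ∑ i ∈ S, h * |a i| ^ q with hP'def
  set P : ℝ := ∑ i ∈ S, h * |b i| ^ q with hPdef
  have hP'0 : 0 ≤ P' := Finset.sum_nonneg fun i _ =>
    mul_nonneg hh.le (Real.rpow_nonneg (abs_nonneg _) _)
  -- scheme in pointwise form
  have hscheme : ∀ i ∈ S, opow (a i) (q-1) - opow (b i) (q-1) = -(Δt * discLap w a i) := by
    intro i hi
    have himem : |i| ≤ Mx := by
      by_contra hcon
      exact ((hmemS i).mpr (not_le.mp hcon)) hi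
    have heq := hFD.2.2 n i himem
    have : (opow (a i) (q-1) - opow (b i) (q-1)) / Δt = -(discLap w a i) := by linarith
    field_simp at this
    linarith
  -- step 1 : convexity bound
  have step1 : (1 - 1/q) * (P' - P) ≤ ∑ i ∈ S, h * ((opow (a i) (q-1) - opow (b i) (q-1)) * a i) := by
    have hle : ∀ i ∈ S, (1 - 1/q) * (h * |a i|^q - h * |b i|^q)
        ≤ h * ((opow (a i) (q-1) - opow (b i) (q-1)) * a i) := by
      intro i _
      have := mul_le_mul_of_nonneg_left (pointwise_conv hq1 (a i) (b i)) hh.le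
      nlinarith [this]
    calc (1 - 1/q) * (P' - P) = ∑ i ∈ S, (1 - 1/q) * (h * |a i|^q - h * |b i|^q) := by
          rw [← Finset.mul_sum, Finset.sum_sub_distrib]
      _ ≤ _ := Finset.sum_le_sum hle
  -- step 2 : sum equals energy
  have step2 : ∑ i ∈ S, h * ((opow (a i) (q-1) - opow (b i) (q-1)) * a i)
      = -(Δt * (energyNorm h w a)^2) := by
    have e1 : ∀ i ∈ S, h * ((opow (a i) (q-1) - opow (b i) (q-1)) * a i)
        = -Δt * (h * a i * discLap w a i) := by
      intro i hi
      rw [hscheme i hi]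
      ring
    rw [Finset.sum_congr rfl e1, ← Finset.mul_sum,
      sum_discLap_eq_energy hh.le hw hws (hsupp (n+1))]
    ring
  -- step 3 : Poincaré–Sobolev
  have hlq : lqNorm h q a = P' ^ (1/q) := lq_eq (ne_of_gt hq0) (hsupp (n+1))
  have hlq2 : (lqNorm h q a)^2 = P' ^ ((2:ℝ)/q) := by
    rw [hlq, ← Real.rpow_natCast (P' ^ (1/q)) 2, ← Real.rpow_mul hP'0]
    congr 1
    push_cast
    ring
  have hPSa := hPS a (hFD.2.1 (n+1))
  have hlqnn : 0 ≤ lqNorm h q a := by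
    rw [hlq]; exact Real.rpow_nonneg hP'0 _
  have step3 : P' ^ ((2:ℝ)/q) ≤ C^2 * (energyNorm h w a)^2 := by
    rw [← hlq2]
    calc (lqNorm h q a)^2 ≤ (C * energyNorm h w a)^2 := by
          apply pow_le_pow_left₀ hlqnn hPSa
      _ = C^2 * (energyNorm h w a)^2 := by ring
  -- combine
  set X : ℝ := P' ^ ((2:ℝ)/q) with hXdef
  set E : ℝ := (energyNorm h w a)^2 with hEdef
  have i1 : (1 - 1/q) * (P' - P) ≤ -(Δt * E) := by rw [← step2]; exact step1
  have hXE : X / C^2 ≤ E := by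
    rw [div_le_iff₀ (by positivity)]
    nlinarith [step3]
  have i2 : (1 - 1/q) * (P' - P) ≤ -(Δt * (X / C^2)) := by
    have := mul_le_mul_of_nonneg_left hXE hΔt.le
    linarith
  have hfrac : 0 < q/(q-1) := by positivity
  have hmul := mul_le_mul_of_nonneg_left i2 hfrac.le
  have e1 : (q/(q-1)) * ((1 - 1/q) * (P' - P)) = P' - P := by
    field_simp
  have e2 : (q/(q-1)) * (-(Δt * (X / C^2))) = -(q/((q-1)*C^2) * Δt * X) := by
    field_simp
  rw [e1, e2] at hmul
  linarith


set_option maxHeartbeats 2000000 in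
lemma seqbound_lt (q C M ε : ℝ) (hq1 : 1 < q) (hq2 : q < 2) (hC : 0 < C) (hM : 0 < M)
    (hε : 0 < ε) :
    ∃ Δt₀ : ℝ, 0 < Δt₀ ∧ ∀ Δt : ℝ, 0 < Δt → Δt < Δt₀ →
      ∀ P : ℕ → ℝ, (∀ k, 0 ≤ P k) → P 0 ≤ M^q →
        (∀ k, P (k+1) + (q/((q-1)*C^2)) * Δt * (P (k+1)) ^ ((2:ℝ)/q) ≤ P k) →
        ∀ n : ℕ, 0 < P n →
          (P n) ^ (1/q) ≤ ((P 0) ^ ((q-2)/q) + ((2-q)/((q-1)*C^2)) * n * Δt) ^ (1/(q-2)) + ε := by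
  have hq0 : (0:ℝ) < q := by linarith
  have hq1' : (0:ℝ) < q - 1 := by linarith
  have hq2' : (0:ℝ) < 2 - q := by linarith
  set lv : ℝ := q/((q-1)*C^2) with hlvdef
  have hlv : 0 < lv := by rw [hlvdef]; positivity
  set c : ℝ := (q-2)/q with hcdef
  have hc0 : c < 0 := by rw [hcdef]; apply div_neg_of_neg_of_pos (by linarith) hq0
  have hcm1 : -1 < c := by
    rw [hcdef, lt_div_iff₀ hq0]; linarith
  set κ : ℝ := (2-q)/((q-1)*C^2) with hκdef
  have hκ : 0 < κ := by rw [hκdef]; positivity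
  have hκc : κ = -c * lv := by rw [hκdef, hcdef, hlvdef]; field_simp; ring
  have hMq : (0:ℝ) < M^q := Real.rpow_pos_of_pos hM q
  set Mq2 : ℝ := (M^q) ^ (-c) with hMq2def
  have hMq2 : 0 < Mq2 := Real.rpow_pos_of_pos hMq _
  set K2 : ℝ := ((-c) + c^2) * Mq2 * lv^2 with hK2def
  have hK2 : 0 < K2 := by
    rw [hK2def]
    have h1 : 0 < -c + c^2 := add_pos_of_pos_of_nonneg (by linarith) (sq_nonneg c)
    positivity
  set m : ℝ := (M^q) ^ c with hmdef
  have hm : 0 < m := Real.rpow_pos_of_pos hMq _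
  set e : ℝ := 1/(q-2) with hedef
  have he0 : e < 0 := by
    rw [hedef]; apply div_neg_of_pos_of_neg (by norm_num) (by linarith)
  set A : ℝ := (-e) * (m^(e-1) + (κ/2)^(e-1)) with hAdef
  have hme : 0 < m^(e-1) := Real.rpow_pos_of_pos hm _
  have hκe : 0 < (κ/2)^(e-1) := Real.rpow_pos_of_pos (by positivity) _
  have hA : 0 < A := by
    rw [hAdef]
    have : 0 < -e := by linarith
    positivity
  refine ⟨min (κ/(2*K2)) (ε/(K2*A+1)), lt_min (by positivity) (by positivity), ?_⟩
  intro Δt hΔt hΔtlt P hP0 hPM hrec n hPn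
  have hΔt1 : K2 * Δt ≤ κ/2 := by
    have h1 : Δt < κ/(2*K2) := lt_of_lt_of_le hΔtlt (min_le_left _ _)
    rw [lt_div_iff₀ (by positivity)] at h1
    have h2 : K2 * Δt ≤ Δt * (2*K2) / 2 := by ring_nf; linarith [le_refl (Δt*K2)]
    linarith
  have hΔt2 : K2 * Δt * A ≤ ε := by
    have h1 : Δt < ε/(K2*A+1) := lt_of_lt_of_le hΔtlt (min_le_right _ _)
    rw [lt_div_iff₀ (by positivity)] at h1
    have h2 : K2*Δt*A = Δt*(K2*A+1) - Δt := by ring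
    linarith
  -- monotonicity
  have hmono : ∀ k, P (k+1) ≤ P k := by
    intro k
    have h1 := hrec k
    have h2 : 0 ≤ lv * Δt * (P (k+1)) ^ ((2:ℝ)/q) :=
      mul_nonneg (mul_nonneg hlv.le hΔt.le) (Real.rpow_nonneg (hP0 _) _)
    linarith
  have hanti : Antitone P := antitone_nat_of_succ_le hmono
  have hPkpos : ∀ k, k ≤ n → 0 < P k := fun k hk => lt_of_lt_of_le hPn (hanti hk)
  have hPkM : ∀ k, P k ≤ M^q := fun k => le_trans (hanti (Nat.zero_le k)) hPM
  set z : ℕ → ℝ := fun k => (P k) ^ c with hzdef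
  -- one step estimate
  have hstep : ∀ k, k + 1 ≤ n → z k ≤ z (k+1) - κ*Δt + K2*Δt^2 := by
    intro k hk
    set a : ℝ := P (k+1) with hadef
    have ha : 0 < a := hPkpos (k+1) hk
    set θ : ℝ := lv * Δt * a^(-c) with hθdef
    have hθ0 : 0 ≤ θ := by
      rw [hθdef]
      exact mul_nonneg (mul_nonneg hlv.le hΔt.le) (Real.rpow_nonneg ha.le _)
    have hexp : a * a^(-c) = a ^ ((2:ℝ)/q) := by
      have h1 : a * a^(-c) = a^(1 + -c) := by
        rw [Real.rpow_add ha, Real.rpow_one]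
      have h2 : (1:ℝ) + -c = 2/q := by
        rw [hcdef]; field_simp; ring
      rw [h1, h2]
    have hab : a * (1+θ) ≤ P k := by
      have h3 : a * (1+θ) = a + lv * Δt * (a * a^(-c)) := by rw [hθdef]; ring
      rw [h3, hexp]
      exact hrec k
    have habpos : 0 < a * (1+θ) := by positivity
    have h4 : (P k)^c ≤ (a*(1+θ))^c :=
      Real.rpow_le_rpow_of_nonpos habpos hab hc0.le
    have h5 : (a*(1+θ))^c = a^c * (1+θ)^c := Real.mul_rpow ha.le (by linarith)
    have hac : 0 < a^c := Real.rpow_pos_of_pos ha _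
    have h6 : (1+θ)^c ≤ 1 + c*θ + (-c + c^2)*θ^2 := expand_neg hc0.le hθ0
    have h7 : a^c * (1+θ)^c ≤ a^c * (1 + c*θ + (-c + c^2)*θ^2) :=
      mul_le_mul_of_nonneg_left h6 hac.le
    have hcc : a^c * a^(-c) = 1 := by
      rw [← Real.rpow_add ha]; simp
    have h8 : a^c * θ = lv * Δt := by
      rw [hθdef]
      calc a^c * (lv * Δt * a^(-c)) = lv * Δt * (a^c * a^(-c)) := by ring
        _ = lv * Δt := by rw [hcc]; ring
    have haMq2 : a^(-c) ≤ Mq2 := by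
      rw [hMq2def]
      exact Real.rpow_le_rpow ha.le (hPkM (k+1)) (by linarith)
    have h9 : a^c * θ^2 ≤ lv^2 * Δt^2 * Mq2 := by
      have : a^c * θ^2 = lv^2 * Δt^2 * a^(-c) := by
        rw [hθdef]
        calc a^c * (lv * Δt * a^(-c))^2
            = lv^2 * Δt^2 * (a^(-c) * (a^c * a^(-c))) := by ring
          _ = lv^2 * Δt^2 * a^(-c) := by rw [hcc]; ring
      rw [this]
      exact mul_le_mul_of_nonneg_left haMq2 (by positivity)
    have hcoef : 0 < -c + c^2 := add_pos_of_pos_of_nonneg (by linarith) (sq_nonneg c)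
    have h10 : a^c * (1 + c*θ + (-c + c^2)*θ^2)
        ≤ a^c + c * (lv*Δt) + (-c + c^2) * (lv^2 * Δt^2 * Mq2) := by
      have e1 : a^c * (1 + c*θ + (-c + c^2)*θ^2)
          = a^c + c * (a^c*θ) + (-c + c^2) * (a^c*θ^2) := by ring
      rw [e1, h8]
      have h11 := mul_le_mul_of_nonneg_left h9 hcoef.le
      linarith
    have hzk : z k = (P k)^c := rfl
    have hzk1 : z (k+1) = a^c := rfl
    rw [hzk, hzk1]
    have hfin : c * (lv*Δt) = -(κ*Δt) := by rw [hκc]; ring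
    have hfin2 : (-c + c^2) * (lv^2 * Δt^2 * Mq2) = K2 * Δt^2 := by rw [hK2def]; ring
    calc (P k)^c ≤ a^c * (1+θ)^c := by rw [← h5]; exact h4
      _ ≤ a^c + c * (lv*Δt) + (-c + c^2) * (lv^2 * Δt^2 * Mq2) := le_trans h7 h10
      _ = a^c - κ*Δt + K2*Δt^2 := by rw [hfin, hfin2]; ring
  -- induction
  have claim : ∀ k, k ≤ n → z 0 + k*(κ*Δt - K2*Δt^2) ≤ z k := by
    intro k
    induction k with
    | zero => intro _; simp
    | succ k ih =>
        intro hk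
        have h1 := ih (by omega)
        have h2 := hstep k hk
        push_cast
        push_cast at h1
        linarith
  set T : ℝ := (n:ℝ) * Δt with hTdef
  have hT0 : 0 ≤ T := by positivity
  set κ' : ℝ := κ - K2*Δt with hκ'def
  have hκ'2 : κ/2 ≤ κ' := by rw [hκ'def]; linarith
  have hzn : z 0 + κ' * T ≤ z n := by
    have h1 := claim n (le_refl n)
    have h2 : (n:ℝ)*(κ*Δt - K2*Δt^2) = κ'*T := by rw [hκ'def, hTdef]; ring
    rw [h2] at h1
    exact h1
  have hz0m : m ≤ z 0 := by
    rw [hmdef]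
    exact Real.rpow_le_rpow_of_nonpos (hPkpos 0 (Nat.zero_le n)) hPM hc0.le
  have hbpos : 0 < z 0 + κ' * T := by
    have : 0 ≤ κ' * T := mul_nonneg (by linarith) hT0
    linarith
  have hapos : 0 < z 0 + κ * T := by
    have : 0 ≤ κ * T := mul_nonneg hκ.le hT0
    linarith
  -- x_n = (z n)^e
  have hxz : (P n) ^ (1/q) = (z n)^e := by
    have h1 : (z n)^e = (P n)^(c*e) := by
      rw [hzdef]
      exact (Real.rpow_mul (hP0 n) c e).symm
    rw [h1]
    congr 1
    have hqne : q ≠ 0 := by linarith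
    have hq2ne : q - 2 ≠ 0 := by linarith
    rw [hcdef, hedef]
    field_simp
  have hznpos : 0 < z n := Real.rpow_pos_of_pos (hPkpos n (le_refl n)) _
  have hchain1 : (z n)^e ≤ (z 0 + κ'*T)^e :=
    Real.rpow_le_rpow_of_nonpos hbpos hzn he0.le
  -- the barrier comparison
  have hgrad := grad_neg (a := z 0 + κ*T) (b := z 0 + κ'*T) (c := e) hapos hbpos he0.le
  have hdiffT : (z 0 + κ*T) - (z 0 + κ'*T) = K2*Δt*T := by rw [hκ'def]; ring
  have hTbound : (-e) * (z 0 + κ'*T)^(e-1) * T ≤ A := by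
    have hne : 0 < -e := by linarith
    rcases le_or_gt T 1 with hT1 | hT1
    · have hmb : m ≤ z 0 + κ'*T := by
        have : 0 ≤ κ' * T := mul_nonneg (by linarith) hT0
        linarith
      have hb1 : (z 0 + κ'*T)^(e-1) ≤ m^(e-1) :=
        Real.rpow_le_rpow_of_nonpos hm hmb (by linarith)
      have s1 : (-e)*(z 0 + κ'*T)^(e-1)*T ≤ ((-e)*m^(e-1))*1 := by
        apply mul_le_mul (mul_le_mul_of_nonneg_left hb1 hne.le) hT1 hT0
        positivity
      have s2 : ((-e)*m^(e-1))*1 ≤ A := by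
        rw [hAdef]
        have h := mul_le_mul_of_nonneg_left
          (by linarith [hκe] : m^(e-1) ≤ m^(e-1) + (κ/2)^(e-1)) hne.le
        linarith
      linarith
    · have hb2 : (κ/2)*T ≤ z 0 + κ'*T := by
        have h1 : (κ/2)*T ≤ κ'*T := mul_le_mul_of_nonneg_right hκ'2 hT0
        linarith
      have hκ2T : 0 < (κ/2)*T := mul_pos (by positivity) (by linarith)
      have hb3 : (z 0 + κ'*T)^(e-1) ≤ ((κ/2)*T)^(e-1) :=
        Real.rpow_le_rpow_of_nonpos hκ2T hb2 (by linarith)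
      have hb4 : ((κ/2)*T)^(e-1) = (κ/2)^(e-1) * T^(e-1) :=
        Real.mul_rpow (by positivity) (by linarith)
      have hb5 : T^(e-1) * T = T^e := by
        have h := Real.rpow_add (by linarith : (0:ℝ) < T) (e-1) 1
        rw [Real.rpow_one] at h
        rw [← h]
        congr 1
        ring
      have hb6 : T^e ≤ 1 := Real.rpow_le_one_of_one_le_of_nonpos hT1.le he0.le
      calc (-e) * (z 0 + κ'*T)^(e-1) * T ≤ (-e) * ((κ/2)^(e-1) * T^(e-1)) * T := by
            rw [← hb4]
            exact mul_le_mul_of_nonneg_right (mul_le_mul_of_nonneg_left hb3 hne.le) hT0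
        _ = (-e) * (κ/2)^(e-1) * (T^(e-1) * T) := by ring
        _ = (-e) * (κ/2)^(e-1) * T^e := by rw [hb5]
        _ ≤ (-e) * (κ/2)^(e-1) * 1 := by
            apply mul_le_mul_of_nonneg_left hb6 (by positivity)
        _ ≤ A := by
            rw [hAdef]
            have h := mul_le_mul_of_nonneg_left
              (by linarith [hme] : (κ/2)^(e-1) ≤ m^(e-1) + (κ/2)^(e-1)) hne.le
            linarith
  have hchain2 : (z 0 + κ'*T)^e ≤ (z 0 + κ*T)^e + ε := by
    have h1 : (z 0 + κ'*T)^e - (z 0 + κ*T)^e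
        ≤ (-e) * (z 0 + κ'*T)^(e-1) * (K2*Δt*T) := by
      have := hgrad
      rw [hdiffT] at this
      exact this
    have h2 : (-e) * (z 0 + κ'*T)^(e-1) * (K2*Δt*T)
        = ((-e) * (z 0 + κ'*T)^(e-1) * T) * (K2*Δt) := by ring
    have h3 : ((-e) * (z 0 + κ'*T)^(e-1) * T) * (K2*Δt) ≤ A * (K2*Δt) := by
      apply mul_le_mul_of_nonneg_right hTbound (by positivity)
    have h4 : A * (K2*Δt) ≤ ε := by
      have : A * (K2*Δt) = K2*Δt*A := by ring
      linarith
    rw [h2] at h1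
    linarith
  -- conclude
  have hfinal : (P n)^(1/q) ≤ (z 0 + κ*T)^e + ε := by
    rw [hxz]
    linarith [hchain1, hchain2]
  have hrw : (P 0) ^ c + κ * (n:ℝ) * Δt = z 0 + κ*T := by
    have hz0 : z 0 = (P 0) ^ c := rfl
    rw [hz0, hTdef]
    ring
  rw [hrw]
  exact hfinal


set_option maxHeartbeats 1000000 in
lemma seqbound_gt (q C M ε : ℝ) (hq2 : 2 < q) (hC : 0 < C) (hM : 0 < M) (hε : 0 < ε) :
    ∃ Δt₀ : ℝ, 0 < Δt₀ ∧ ∀ Δt : ℝ, 0 < Δt → Δt < Δt₀ →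
      ∀ P : ℕ → ℝ, (∀ k, 0 ≤ P k) → P 0 ≤ M^q →
        (∀ k, P (k+1) + (q/((q-1)*C^2)) * Δt * (P (k+1)) ^ ((2:ℝ)/q) ≤ P k) →
        ∀ n : ℕ, ε^q < P n →
          (P n) ^ (1/q)
            ≤ (max ((P 0) ^ ((q-2)/q) + ((2-q)/((q-1)*C^2)) * n * Δt) 0) ^ (1/(q-2)) + ε := by
  have hq0 : (0:ℝ) < q := by linarith
  have hq1' : (0:ℝ) < q - 1 := by linarith
  have hq2' : (0:ℝ) < q - 2 := by linarith
  set lv : ℝ := q/((q-1)*C^2) with hlvdef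
  have hlv : 0 < lv := by rw [hlvdef]; positivity
  set c : ℝ := (q-2)/q with hcdef
  have hc0 : 0 < c := by rw [hcdef]; positivity
  have hc1 : c < 1 := by rw [hcdef, div_lt_one hq0]; linarith
  set κa : ℝ := (q-2)/((q-1)*C^2) with hκadef
  have hκa : 0 < κa := by rw [hκadef]; positivity
  have hκac : κa = c * lv := by
    rw [hκadef, hcdef, hlvdef]; field_simp
  have hMq : (0:ℝ) < M^q := Real.rpow_pos_of_pos hM q
  set Eps : ℝ := ε^q with hEpsdef
  have hEps : 0 < Eps := Real.rpow_pos_of_pos hε q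
  set K3 : ℝ := (1-c) * lv^2 * Eps^(-c) with hK3def
  have hK3 : 0 < K3 := by
    rw [hK3def]
    have h1 : 0 < 1 - c := by linarith
    have h2 : 0 < Eps^(-c) := Real.rpow_pos_of_pos hEps _
    positivity
  set B : ℝ := (M^q)^c with hBdef
  have hB : 0 < B := Real.rpow_pos_of_pos hMq _
  set Tmax : ℝ := 2*B/κa with hTmaxdef
  have hTmax : 0 < Tmax := by rw [hTmaxdef]; positivity
  set e : ℝ := 1/(q-2) with hedef
  have he0 : 0 < e := by rw [hedef]; positivity
  set ρ₀ : ℝ := min 1 (min (ε^(q-2)) (ε/(e*(B+1)^(e-1) + 1))) with hρ₀def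
  have hBe : 0 < (B+1)^(e-1) := Real.rpow_pos_of_pos (by linarith) _
  have hρ₀ : 0 < ρ₀ := by
    rw [hρ₀def]
    apply lt_min one_pos
    apply lt_min (Real.rpow_pos_of_pos hε _)
    positivity
  refine ⟨min (κa/(2*K3)) (ρ₀/(K3*Tmax + 1)), lt_min (by positivity) (by positivity), ?_⟩
  intro Δt hΔt hΔtlt P hP0 hPM hrec n hPn
  have hΔt1 : K3 * Δt ≤ κa/2 := by
    have h1 : Δt < κa/(2*K3) := lt_of_lt_of_le hΔtlt (min_le_left _ _)
    rw [lt_div_iff₀ (by positivity)] at h1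
    linarith
  set ρ : ℝ := K3 * Tmax * Δt with hρdef
  have hρpos : 0 < ρ := by rw [hρdef]; positivity
  have hρρ₀ : ρ ≤ ρ₀ := by
    have h1 : Δt < ρ₀/(K3*Tmax+1) := lt_of_lt_of_le hΔtlt (min_le_right _ _)
    rw [lt_div_iff₀ (by positivity)] at h1
    have h2 : ρ = Δt*(K3*Tmax+1) - Δt := by rw [hρdef]; ring
    linarith
  -- monotonicity
  have hmono : ∀ k, P (k+1) ≤ P k := by
    intro k
    have h1 := hrec k
    have h2 : 0 ≤ lv * Δt * (P (k+1)) ^ ((2:ℝ)/q) :=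
      mul_nonneg (mul_nonneg hlv.le hΔt.le) (Real.rpow_nonneg (hP0 _) _)
    linarith
  have hanti : Antitone P := antitone_nat_of_succ_le hmono
  have hPkpos : ∀ k, k ≤ n → Eps < P k := fun k hk => lt_of_lt_of_le hPn (hanti hk)
  have hPkM : ∀ k, P k ≤ M^q := fun k => le_trans (hanti (Nat.zero_le k)) hPM
  set z : ℕ → ℝ := fun k => (P k) ^ c with hzdef
  -- one step estimate
  have hstep : ∀ k, k + 1 ≤ n → z (k+1) ≤ z k - κa*Δt + K3*Δt^2 := by
    intro k hk
    set a : ℝ := P (k+1) with hadef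
    have haE : Eps < a := hPkpos (k+1) hk
    have ha : 0 < a := lt_trans hEps haE
    set θ : ℝ := lv * Δt * a^(-c) with hθdef
    have hθ0 : 0 ≤ θ := by
      rw [hθdef]
      exact mul_nonneg (mul_nonneg hlv.le hΔt.le) (Real.rpow_nonneg ha.le _)
    have hexp : a * a^(-c) = a ^ ((2:ℝ)/q) := by
      have h1 : a * a^(-c) = a^(1 + -c) := by
        rw [Real.rpow_add ha, Real.rpow_one]
      have h2 : (1:ℝ) + -c = 2/q := by
        have hqne : q ≠ 0 := by linarith
        rw [hcdef]; field_simp; ring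
      rw [h1, h2]
    have hab : a * (1+θ) ≤ P k := by
      have h3 : a * (1+θ) = a + lv * Δt * (a * a^(-c)) := by rw [hθdef]; ring
      rw [h3, hexp]
      exact hrec k
    have habpos : 0 < a * (1+θ) := by positivity
    have h4 : (a*(1+θ))^c ≤ (P k)^c :=
      Real.rpow_le_rpow habpos.le hab hc0.le
    have h5 : (a*(1+θ))^c = a^c * (1+θ)^c := Real.mul_rpow ha.le (by linarith)
    have hac : 0 < a^c := Real.rpow_pos_of_pos ha _
    have h6 : 1 + c*θ - (1-c)*θ^2 ≤ (1+θ)^c := expand_pos hc0.le hc1.le hθ0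
    have h7 : a^c * (1 + c*θ - (1-c)*θ^2) ≤ a^c * (1+θ)^c :=
      mul_le_mul_of_nonneg_left h6 hac.le
    have hcc : a^c * a^(-c) = 1 := by
      rw [← Real.rpow_add ha]; simp
    have h8 : a^c * θ = lv * Δt := by
      rw [hθdef]
      calc a^c * (lv * Δt * a^(-c)) = lv * Δt * (a^c * a^(-c)) := by ring
        _ = lv * Δt := by rw [hcc]; ring
    have haEps : a^(-c) ≤ Eps^(-c) :=
      Real.rpow_le_rpow_of_nonpos hEps haE.le (by linarith)
    have h9 : a^c * θ^2 ≤ lv^2 * Δt^2 * Eps^(-c) := by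
      have heq : a^c * θ^2 = lv^2 * Δt^2 * a^(-c) := by
        rw [hθdef]
        calc a^c * (lv * Δt * a^(-c))^2
            = lv^2 * Δt^2 * (a^(-c) * (a^c * a^(-c))) := by ring
          _ = lv^2 * Δt^2 * a^(-c) := by rw [hcc]; ring
      rw [heq]
      exact mul_le_mul_of_nonneg_left haEps (by positivity)
    have hzk : z k = (P k)^c := rfl
    have hzk1 : z (k+1) = a^c := rfl
    rw [hzk, hzk1]
    have hcoef : 0 < 1 - c := by linarith
    have h10 : a^c ≤ (P k)^c - κa*Δt + (1-c)*(lv^2*Δt^2*Eps^(-c)) := by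
      have e1 : a^c * (1 + c*θ - (1-c)*θ^2)
          = a^c + c*(a^c*θ) - (1-c)*(a^c*θ^2) := by ring
      have h11 := mul_le_mul_of_nonneg_left h9 hcoef.le
      have h12 : c*(lv*Δt) = κa*Δt := by rw [hκac]; ring
      rw [e1, h8, h12] at h7
      have h13 := le_trans h7 (h5 ▸ h4)
      linarith
    have hK3e : (1-c)*(lv^2*Δt^2*Eps^(-c)) = K3*Δt^2 := by rw [hK3def]; ring
    rw [hK3e] at h10
    linarith
  -- induction
  have claim : ∀ k, k ≤ n → z k ≤ z 0 + k*(-(κa*Δt) + K3*Δt^2) := by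
    intro k
    induction k with
    | zero => intro _; simp
    | succ k ih =>
        intro hk
        have h1 := ih (by omega)
        have h2 := hstep k hk
        push_cast
        push_cast at h1
        linarith
  set T : ℝ := (n:ℝ) * Δt with hTdef
  have hT0 : 0 ≤ T := by positivity
  have hzn_ub : z n ≤ z 0 - κa*T + K3*Δt*T := by
    have h1 := claim n (le_refl n)
    have h2 : (n:ℝ)*(-(κa*Δt) + K3*Δt^2) = -(κa*T) + K3*Δt*T := by rw [hTdef]; ring
    rw [h2] at h1
    linarith
  have hz0B : z 0 ≤ B := by
    rw [hBdef]
    exact Real.rpow_le_rpow (hP0 0) hPM hc0.le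
  have hznpos : 0 < z n := Real.rpow_pos_of_pos (lt_trans hEps (hPkpos n (le_refl n))) _
  -- T is bounded
  have hTbound : T ≤ Tmax := by
    have h1 : 0 < z 0 - κa*T + K3*Δt*T := lt_of_lt_of_le hznpos hzn_ub
    have h2 : K3*Δt*T ≤ (κa/2)*T := mul_le_mul_of_nonneg_right hΔt1 hT0
    have h3 : (κa/2)*T ≤ z 0 := by linarith
    rw [hTmaxdef]
    rw [le_div_iff₀ hκa]
    linarith
  have hρ' : K3*Δt*T ≤ ρ := by
    rw [hρdef]
    calc K3*Δt*T = K3*T*Δt := by ring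
      _ ≤ K3*Tmax*Δt := by
          apply mul_le_mul_of_nonneg_right (mul_le_mul_of_nonneg_left hTbound hK3.le) hΔt.le
  set b' : ℝ := max (z 0 - κa*T) 0 with hb'def
  have hb'0 : 0 ≤ b' := le_max_right _ _
  have hb'B : b' ≤ B := by
    rw [hb'def]
    apply max_le _ hB.le
    have : 0 ≤ κa*T := mul_nonneg hκa.le hT0
    linarith
  have hznb' : z n ≤ b' + ρ := by
    have h1 : z 0 - κa*T ≤ b' := le_max_left _ _
    linarith
  -- x_n = (z n)^e
  have hxz : (P n) ^ (1/q) = (z n)^e := by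
    have h1 : (z n)^e = (P n)^(c*e) := by
      rw [hzdef]
      exact (Real.rpow_mul (hP0 n) c e).symm
    rw [h1]
    congr 1
    have hqne : q ≠ 0 := by linarith
    have hq2ne : q - 2 ≠ 0 := by linarith
    rw [hcdef, hedef]
    field_simp
  have hchain1 : (z n)^e ≤ (b' + ρ)^e :=
    Real.rpow_le_rpow hznpos.le hznb' he0.le
  have hchain2 : (b' + ρ)^e ≤ b'^e + ε := by
    rcases le_or_gt e 1 with he1 | he1
    · have h1 := rpow_subadd hb'0 hρpos.le he0 he1
      have h2 : ρ^e ≤ ε := by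
        have h3 : ρ ≤ ε^(q-2) := le_trans hρρ₀ (by
          rw [hρ₀def]
          exact le_trans (min_le_right _ _) (min_le_left _ _))
        have h4 : ρ^e ≤ (ε^(q-2))^e := Real.rpow_le_rpow hρpos.le h3 he0.le
        have h5 : (ε^(q-2))^e = ε := by
          rw [← Real.rpow_mul hε.le]
          rw [show (q-2)*e = 1 from by rw [hedef]; field_simp, Real.rpow_one]
        rw [h5] at h4
        exact h4
      linarith
    · have h1 := grad_conv hb'0 hρpos he1.le
      have hρ1 : ρ ≤ 1 := le_trans hρρ₀ (by rw [hρ₀def]; exact min_le_left _ _)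
      have h2 : (b'+ρ)^(e-1) ≤ (B+1)^(e-1) := by
        apply Real.rpow_le_rpow (by linarith) (by linarith) (by linarith)
      have h3 : ρ ≤ ε/(e*(B+1)^(e-1) + 1) := le_trans hρρ₀ (by
        rw [hρ₀def]
        exact le_trans (min_le_right _ _) (min_le_right _ _))
      have h4 : e*(b'+ρ)^(e-1)*ρ ≤ e*(B+1)^(e-1)*ρ :=
        mul_le_mul_of_nonneg_right (mul_le_mul_of_nonneg_left h2 he0.le) hρpos.le
      have h5 : e*(B+1)^(e-1)*ρ ≤ ε := by
        rw [le_div_iff₀ (by positivity)] at h3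
        have h6 : e*(B+1)^(e-1)*ρ = ρ*(e*(B+1)^(e-1)+1) - ρ := by ring
        linarith
      linarith
  -- conclude
  have hfinal : (P n)^(1/q) ≤ b'^e + ε := by
    rw [hxz]
    linarith
  have harg : (P 0)^c + (2-q)/((q-1)*C^2) * (n:ℝ) * Δt = z 0 - κa*T := by
    have hz0 : z 0 = (P 0)^c := rfl
    rw [hz0, hTdef, hκadef]
    ring
  rw [harg, ← hb'def]
  exact hfinal


end Stmt13Aux

theorem stmt13 (q C M : ℝ) (hq1 : 1 < q) (hq2 : q ≠ 2) (hC : 0 < C) (hM : 0 < M) :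
    ∀ ε : ℝ, 0 < ε → ∃ Δt₀ : ℝ, 0 < Δt₀ ∧
      ∀ h : ℝ, 0 < h → ∀ Mx : ℤ, 1 ≤ Mx →
        ∀ w : ℤ → ℝ, (∀ j : ℤ, 0 ≤ w j) → (∀ j : ℤ, w (-j) = w j) → Summable w →
          PSConst h q C w Mx →
          ∀ u0 : ℤ → ℝ, (∀ i : ℤ, Mx < |i| → u0 i = 0) → (∃ i : ℤ, u0 i ≠ 0) →
            lqNorm h q u0 ≤ M →
            ∀ Δt : ℝ, 0 < Δt → Δt < Δt₀ →
              ∀ u : ℕ → ℤ → ℝ, IsFD q Δt w Mx u0 u →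
                ∀ n : ℕ,
                  lqNorm h q (u n) ≤
                    (max (lqNorm h q u0 ^ (q - 2) +
                        ((2 - q) / (q - 1)) * C ^ (-2 : ℤ) * (n : ℝ) * Δt) 0) ^ (1 / (q - 2)) + ε := by
  intro ε hε
  have hq0 : (0:ℝ) < q := by linarith
  rcases lt_or_gt_of_ne hq2 with hqlt | hqgt
  · -- q < 2
    obtain ⟨Δt₀, hΔt₀, hseq⟩ := Stmt13Aux.seqbound_lt q C M ε hq1 hqlt hC hM hε
    refine ⟨Δt₀, hΔt₀, ?_⟩
    intro h hh Mx hMx w hw hwsym hws hPS u0 hsupp0 hne0 hM0 Δt hΔt hΔtlt u hFD n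
    have hmemS : ∀ i : ℤ, i ∉ Finset.Icc (-Mx) Mx ↔ Mx < |i| := fun i => by
      rw [Finset.mem_Icc, ← abs_le]; exact not_le
    have hsupp : ∀ k : ℕ, ∀ i ∉ Finset.Icc (-Mx) Mx, u k i = 0 :=
      fun k i hi => hFD.2.1 k i ((hmemS i).mp hi)
    set P : ℕ → ℝ := fun k => ∑ i ∈ Finset.Icc (-Mx) Mx, h * |u k i| ^ q with hPdef
    have hP0 : ∀ k, 0 ≤ P k := fun k => Finset.sum_nonneg fun i _ =>
      mul_nonneg hh.le (Real.rpow_nonneg (abs_nonneg _) _)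
    have hlqk : ∀ k, lqNorm h q (u k) = (P k) ^ (1/q) :=
      fun k => Stmt13Aux.lq_eq (ne_of_gt hq0) (hsupp k)
    have hu00 : u 0 = u0 := hFD.1
    have hPM : P 0 ≤ M ^ q := by
      have h2 : (P 0)^(1/q) ≤ M := by rw [← hlqk 0, hu00]; exact hM0
      have h3 := Real.rpow_le_rpow (Real.rpow_nonneg (hP0 0) _) h2 hq0.le
      rw [← Real.rpow_mul (hP0 0), show (1/q)*q = 1 from by field_simp, Real.rpow_one] at h3
      exact h3
    have hrec : ∀ k, P (k+1) + (q/((q-1)*C^2)) * Δt * (P (k+1)) ^ ((2:ℝ)/q) ≤ P k :=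
      fun k => Stmt13Aux.onestep hq1 hC hh hΔt hw hws hPS hFD k
    rcases eq_or_lt_of_le (hP0 n) with hPn0 | hPn
    · rw [hlqk n, ← hPn0, Real.zero_rpow (by positivity : (1:ℝ)/q ≠ 0)]
      have hnn : 0 ≤ (max (lqNorm h q u0 ^ (q - 2) +
          ((2 - q) / (q - 1)) * C ^ (-2 : ℤ) * (n : ℝ) * Δt) 0) ^ (1 / (q - 2)) :=
        Real.rpow_nonneg (le_max_right _ _) _
      linarith
    · have hfin := hseq Δt hΔt hΔtlt P hP0 hPM hrec n hPn
      rw [hlqk n]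
      obtain ⟨i0, hi0⟩ := hne0
      have hi0S : i0 ∈ Finset.Icc (-Mx) Mx := by
        by_contra hcon
        exact hi0 (hsupp0 i0 ((hmemS i0).mp hcon))
      have hP0pos : 0 < P 0 := by
        apply Finset.sum_pos' (fun i _ => mul_nonneg hh.le (Real.rpow_nonneg (abs_nonneg _) _))
        refine ⟨i0, hi0S, ?_⟩
        apply mul_pos hh
        apply Real.rpow_pos_of_pos
        rw [hu00]
        exact abs_pos.mpr hi0
      have hlq0 : lqNorm h q u0 ^ (q-2) = (P 0) ^ ((q-2)/q) := by
        rw [← hu00, hlqk 0, ← Real.rpow_mul (hP0 0)]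
        congr 1
        ring
      have hCz : C ^ (-2 : ℤ) = (C^2)⁻¹ := by
        rw [zpow_neg]
        norm_cast
      have hco : ((2-q)/(q-1)) * C^(-2:ℤ) = (2-q)/((q-1)*C^2) := by
        rw [hCz]
        field_simp
      have harg_pos : 0 < (P 0)^((q-2)/q) + (2-q)/((q-1)*C^2) * (n:ℝ) * Δt := by
        have h1 : 0 < (P 0)^((q-2)/q) := Real.rpow_pos_of_pos hP0pos _
        have h2 : 0 ≤ (2-q)/((q-1)*C^2) * (n:ℝ) * Δt := by
          have hden : (0:ℝ) ≤ (q-1)*C^2 := mul_nonneg (by linarith) (sq_nonneg C)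
          apply mul_nonneg (mul_nonneg (div_nonneg (by linarith) hden)
            (Nat.cast_nonneg n)) hΔt.le
        linarith
      rw [hlq0, hco, max_eq_left harg_pos.le]
      exact hfin
  · -- q > 2
    obtain ⟨Δt₀, hΔt₀, hseq⟩ := Stmt13Aux.seqbound_gt q C M ε hqgt hC hM hε
    refine ⟨Δt₀, hΔt₀, ?_⟩
    intro h hh Mx hMx w hw hwsym hws hPS u0 hsupp0 hne0 hM0 Δt hΔt hΔtlt u hFD n
    have hmemS : ∀ i : ℤ, i ∉ Finset.Icc (-Mx) Mx ↔ Mx < |i| := fun i => by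
      rw [Finset.mem_Icc, ← abs_le]; exact not_le
    have hsupp : ∀ k : ℕ, ∀ i ∉ Finset.Icc (-Mx) Mx, u k i = 0 :=
      fun k i hi => hFD.2.1 k i ((hmemS i).mp hi)
    set P : ℕ → ℝ := fun k => ∑ i ∈ Finset.Icc (-Mx) Mx, h * |u k i| ^ q with hPdef
    have hP0 : ∀ k, 0 ≤ P k := fun k => Finset.sum_nonneg fun i _ =>
      mul_nonneg hh.le (Real.rpow_nonneg (abs_nonneg _) _)
    have hlqk : ∀ k, lqNorm h q (u k) = (P k) ^ (1/q) :=
      fun k => Stmt13Aux.lq_eq (ne_of_gt hq0) (hsupp k)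
    have hu00 : u 0 = u0 := hFD.1
    have hPM : P 0 ≤ M ^ q := by
      have h2 : (P 0)^(1/q) ≤ M := by rw [← hlqk 0, hu00]; exact hM0
      have h3 := Real.rpow_le_rpow (Real.rpow_nonneg (hP0 0) _) h2 hq0.le
      rw [← Real.rpow_mul (hP0 0), show (1/q)*q = 1 from by field_simp, Real.rpow_one] at h3
      exact h3
    have hrec : ∀ k, P (k+1) + (q/((q-1)*C^2)) * Δt * (P (k+1)) ^ ((2:ℝ)/q) ≤ P k :=
      fun k => Stmt13Aux.onestep hq1 hC hh hΔt hw hws hPS hFD k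
    rcases le_or_gt (lqNorm h q (u n)) ε with hle | hgt
    · have hnn : 0 ≤ (max (lqNorm h q u0 ^ (q - 2) +
          ((2 - q) / (q - 1)) * C ^ (-2 : ℤ) * (n : ℝ) * Δt) 0) ^ (1 / (q - 2)) :=
        Real.rpow_nonneg (le_max_right _ _) _
      linarith
    · have hPn : ε^q < P n := by
        have h2 : ε < (P n)^(1/q) := by rw [← hlqk n]; exact hgt
        have h3 := Real.rpow_lt_rpow hε.le h2 hq0
        rw [← Real.rpow_mul (hP0 n), show (1/q)*q = 1 from by field_simp,
          Real.rpow_one] at h3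
        exact h3
      have hfin := hseq Δt hΔt hΔtlt P hP0 hPM hrec n hPn
      rw [hlqk n]
      have hlq0 : lqNorm h q u0 ^ (q-2) = (P 0) ^ ((q-2)/q) := by
        rw [← hu00, hlqk 0, ← Real.rpow_mul (hP0 0)]
        congr 1
        ring
      have hCz : C ^ (-2 : ℤ) = (C^2)⁻¹ := by
        rw [zpow_neg]
        norm_cast
      have hco : ((2-q)/(q-1)) * C^(-2:ℤ) = (2-q)/((q-1)*C^2) := by
        rw [hCz]
        field_simp
      rw [hlq0, hco]
      exact hfin
end

section
/- Let q > 1, a mesh size h > 0, an integer M_x ≥ 1, nonnegative symmetric summable weights (w_j)_{j≠0}, and initial data u⁰ : ℤ → ℝ with u⁰_i = 0 for |i| > M_x. For each time step Δt > 0 let (u^{n,Δt})_{n∈ℕ} be the solution of the fully discrete implicit scheme (FD) with data u⁰, and define the piecewise-constant interpolant v^{Δt}_i : [0,∞) → ℝ by v^{Δt}_i(0) := u⁰_i and v^{Δt}_i(t) := u^{n+1,Δt}_i for t ∈ (nΔt, (n+1)Δt]. Let (v_i)_{i∈ℤ} be the solution of the semi-discrete scheme (SD) with initial data u⁰. Then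 for every i ∈ ℤ and every T > 0, sup_{t∈[0,T]} |v^{Δt}_i(t) − v_i(t)| → 0 as Δt → 0⁺. -/
open scoped BigOperators ENNReal

/-- Piecewise-constant-in-time interpolant of the fully discrete solution:
`interp Δt u0 u i 0 = u0 i` and `interp Δt u0 u i t = u (n+1) i` for `t ∈ (nΔt, (n+1)Δt]`. -/
noncomputable def interp (Δt : ℝ) (u0 : ℤ → ℝ) (u : ℕ → ℤ → ℝ) (i : ℤ) (t : ℝ) : ℝ :=
  if t ≤ 0 then u0 i else u (Int.toNat ⌈t / Δt⌉) i

noncomputable def Wt (w : ℤ → ℝ) (j : ℤ) : ℝ := if j = 0 then 0 else w j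

noncomputable def Swt (w : ℤ → ℝ) : ℝ := ∑' j, Wt w j

noncomputable def box (Mx : ℤ) : Finset ℤ := Finset.Icc (-Mx) Mx

noncomputable def Lop (w : ℤ → ℝ) (Mx : ℤ) (x : ℤ → ℝ) (i : ℤ) : ℝ :=
  Swt w * x i - ∑ k ∈ box Mx, Wt w (i - k) * x k

lemma mem_box {Mx k : ℤ} : k ∈ box Mx ↔ |k| ≤ Mx := by
  simp [box, Finset.mem_Icc, abs_le, and_comm]

lemma Wt_nonneg (w : ℤ → ℝ) (hw0 : ∀ j, 0 ≤ w j) (j : ℤ) : 0 ≤ Wt w j := by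
  unfold Wt; split <;> [rfl; exact hw0 j]

lemma Wt_symm (w : ℤ → ℝ) (hwsym : ∀ j, w (-j) = w j) (j : ℤ) : Wt w (-j) = Wt w j := by
  unfold Wt
  rcases eq_or_ne j 0 with rfl | hj
  · simp
  · rw [if_neg (by simpa using hj), if_neg hj, hwsym]

lemma Wt_symm' (w : ℤ → ℝ) (hwsym : ∀ j, w (-j) = w j) (i k : ℤ) :
    Wt w (i - k) = Wt w (k - i) := by
  have := Wt_symm w hwsym (k - i); rwa [neg_sub] at this

lemma summable_Wt (w : ℤ → ℝ) (hw0 : ∀ j, 0 ≤ w j) (hwsum : Summable w) :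
    Summable (Wt w) := by
  refine Summable.of_nonneg_of_le (Wt_nonneg w hw0) (fun j => ?_) hwsum
  unfold Wt; split
  · exact hw0 j
  · exact le_rfl

lemma Swt_nonneg (w : ℤ → ℝ) (hw0 : ∀ j, 0 ≤ w j) : 0 ≤ Swt w :=
  tsum_nonneg (Wt_nonneg w hw0)

lemma rowsum_le (w : ℤ → ℝ) (hw0 : ∀ j, 0 ≤ w j) (hwsum : Summable w) (Mx i : ℤ) :
    ∑ k ∈ box Mx, Wt w (i - k) ≤ Swt w := by
  rw [← Finset.sum_image (f := Wt w) (g := fun k => i - k)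
    (fun a _ b _ hab => by simp only at hab; omega)]
  exact Summable.sum_le_tsum _ (fun j _ => Wt_nonneg w hw0 j) (summable_Wt w hw0 hwsum)

lemma discLap_eq_Lop (w : ℤ → ℝ) (hw0 : ∀ j, 0 ≤ w j) (hwsum : Summable w)
    (Mx : ℤ) (x : ℤ → ℝ) (hx : ∀ k, k ∉ box Mx → x k = 0) (i : ℤ) :
    discLap w x i = Lop w Mx x i := by
  have hWs := summable_Wt w hw0 hwsum
  -- bound on x
  obtain ⟨C, hC⟩ : ∃ C, ∀ k, |x k| ≤ C := by
    refine ⟨∑ k ∈ box Mx, |x k|, fun k => ?_⟩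
    by_cases hk : k ∈ box Mx
    · exact Finset.single_le_sum (f := fun k => |x k|) (fun _ _ => abs_nonneg _) hk
    · rw [hx k hk]; simp; positivity
  have hsum2 : Summable (fun j => Wt w j * x (i - j)) := by
    apply Summable.of_norm
    refine Summable.of_nonneg_of_le (fun j => norm_nonneg _) (fun j => ?_) (hWs.mul_right C)
    have : ‖Wt w j * x (i - j)‖ = Wt w j * |x (i - j)| := by
      rw [norm_mul, Real.norm_eq_abs, Real.norm_eq_abs, abs_of_nonneg (Wt_nonneg w hw0 j)]
    rw [this]
    exact mul_le_mul_of_nonneg_left (hC _) (Wt_nonneg w hw0 j)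
  have h1 : discLap w x i = ∑' j, (Wt w j * x i - Wt w j * x (i - j)) := by
    unfold discLap
    congr 1; funext j
    unfold Wt; split <;> ring
  have h2 : (∑' j, Wt w j * x (i - j)) = ∑ k ∈ box Mx, Wt w (i - k) * x k := by
    have himg : ∀ j, j ∉ (box Mx).image (fun k => i - k) → Wt w j * x (i - j) = 0 := by
      intro j hj
      have : x (i - j) = 0 := by
        apply hx
        intro hmem
        exact hj (Finset.mem_image.2 ⟨i - j, hmem, by omega⟩)
      rw [this, mul_zero]
    rw [tsum_eq_sum himg, Finset.sum_image (fun a _ b _ hab => by omega : ∀ a ∈ box Mx, ∀ b ∈ box Mx, i - a = i - b → a = b)]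
    exact Finset.sum_congr rfl (fun k _ => by rw [sub_sub_cancel])
  rw [h1, Summable.tsum_sub (hWs.mul_right _) hsum2, tsum_mul_right, h2]
  rfl

noncomputable def Bf (w : ℤ → ℝ) (Mx : ℤ) (x y : ℤ → ℝ) : ℝ :=
  ∑ i ∈ box Mx, Lop w Mx x i * y i

lemma Lop_add (w : ℤ → ℝ) (Mx : ℤ) (x y : ℤ → ℝ) (i : ℤ) :
    Lop w Mx (fun k => x k + y k) i = Lop w Mx x i + Lop w Mx y i := by
  unfold Lop
  have : ∑ k ∈ box Mx, Wt w (i - k) * (x k + y k)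
      = ∑ k ∈ box Mx, (Wt w (i - k) * x k + Wt w (i - k) * y k) :=
    Finset.sum_congr rfl (fun k _ => by ring)
  rw [this, Finset.sum_add_distrib]; ring

lemma Lop_smul (w : ℤ → ℝ) (Mx : ℤ) (c : ℝ) (y : ℤ → ℝ) (i : ℤ) :
    Lop w Mx (fun k => c * y k) i = c * Lop w Mx y i := by
  unfold Lop
  have : ∑ k ∈ box Mx, Wt w (i - k) * (c * y k)
      = c * ∑ k ∈ box Mx, Wt w (i - k) * y k := by
    rw [Finset.mul_sum]; exact Finset.sum_congr rfl (fun k _ => by ring)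
  rw [this]; ring

lemma Bf_expand (w : ℤ → ℝ) (Mx : ℤ) (x y : ℤ → ℝ) :
    Bf w Mx x y = Swt w * ∑ i ∈ box Mx, x i * y i
      - ∑ i ∈ box Mx, ∑ k ∈ box Mx, Wt w (i - k) * x k * y i := by
  unfold Bf Lop
  rw [Finset.mul_sum, ← Finset.sum_sub_distrib]
  refine Finset.sum_congr rfl (fun i _ => ?_)
  rw [sub_mul, Finset.sum_mul, mul_assoc]

lemma Bf_symm (w : ℤ → ℝ) (hwsym : ∀ j, w (-j) = w j) (Mx : ℤ) (x y : ℤ → ℝ) :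
    Bf w Mx x y = Bf w Mx y x := by
  rw [Bf_expand, Bf_expand]
  congr 1
  · congr 1; exact Finset.sum_congr rfl (fun i _ => mul_comm _ _)
  · rw [Finset.sum_comm]
    refine Finset.sum_congr rfl (fun i _ => Finset.sum_congr rfl (fun k _ => ?_))
    rw [Wt_symm' w hwsym i k]; ring

lemma Bf_add_left (w : ℤ → ℝ) (Mx : ℤ) (x y z : ℤ → ℝ) :
    Bf w Mx (fun i => x i + y i) z = Bf w Mx x z + Bf w Mx y z := by
  unfold Bf
  rw [← Finset.sum_add_distrib]
  exact Finset.sum_congr rfl (fun i _ => by rw [Lop_add]; ring)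

lemma Bf_smul_left (w : ℤ → ℝ) (Mx : ℤ) (c : ℝ) (x z : ℤ → ℝ) :
    Bf w Mx (fun i => c * x i) z = c * Bf w Mx x z := by
  unfold Bf
  rw [Finset.mul_sum]
  exact Finset.sum_congr rfl (fun i _ => by rw [Lop_smul]; ring)

-- key quadratic inequality: |cross sum| ≤ Swt * ∑ x²
lemma cross_abs_le (w : ℤ → ℝ) (hw0 : ∀ j, 0 ≤ w j) (hwsym : ∀ j, w (-j) = w j)
    (hwsum : Summable w) (Mx : ℤ) (x : ℤ → ℝ) :
    |∑ i ∈ box Mx, ∑ k ∈ box Mx, Wt w (i - k) * x k * x i|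
      ≤ Swt w * ∑ i ∈ box Mx, x i ^ 2 := by
  have habs : |∑ i ∈ box Mx, ∑ k ∈ box Mx, Wt w (i - k) * x k * x i|
      ≤ ∑ i ∈ box Mx, ∑ k ∈ box Mx, Wt w (i - k) * ((x k ^ 2 + x i ^ 2) / 2) := by
    refine (Finset.abs_sum_le_sum_abs _ _).trans ?_
    refine Finset.sum_le_sum (fun i _ => ?_)
    refine (Finset.abs_sum_le_sum_abs _ _).trans ?_
    refine Finset.sum_le_sum (fun k _ => ?_)
    have h1 : |Wt w (i - k) * x k * x i| = Wt w (i - k) * |x k * x i| := by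
      rw [mul_assoc, abs_mul, abs_of_nonneg (Wt_nonneg w hw0 _)]
    rw [h1]
    refine mul_le_mul_of_nonneg_left ?_ (Wt_nonneg w hw0 _)
    rw [abs_mul]
    nlinarith [abs_nonneg (x k), abs_nonneg (x i), sq_abs (x k), sq_abs (x i),
      sq_nonneg (|x k| - |x i|)]
  refine habs.trans ?_
  have hsplit : ∑ i ∈ box Mx, ∑ k ∈ box Mx, Wt w (i - k) * ((x k ^ 2 + x i ^ 2) / 2)
      = ∑ i ∈ box Mx, (∑ k ∈ box Mx, Wt w (i - k)) * x i ^ 2 := by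
    have h2 : ∀ i ∈ box Mx, ∑ k ∈ box Mx, Wt w (i - k) * ((x k ^ 2 + x i ^ 2) / 2)
        = (∑ k ∈ box Mx, Wt w (i - k) * (x k ^ 2 / 2))
          + (∑ k ∈ box Mx, Wt w (i - k)) * (x i ^ 2 / 2) := by
      intro i _
      rw [Finset.sum_mul, ← Finset.sum_add_distrib]
      exact Finset.sum_congr rfl (fun k _ => by ring)
    rw [Finset.sum_congr rfl h2, Finset.sum_add_distrib]
    -- swap the first double sum
    have h3 : ∑ i ∈ box Mx, ∑ k ∈ box Mx, Wt w (i - k) * (x k ^ 2 / 2)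
        = ∑ i ∈ box Mx, (∑ k ∈ box Mx, Wt w (i - k)) * (x i ^ 2 / 2) := by
      rw [Finset.sum_comm]
      refine Finset.sum_congr rfl (fun k _ => ?_)
      rw [Finset.sum_mul]
      refine Finset.sum_congr rfl (fun i _ => ?_)
      rw [Wt_symm' w hwsym i k]
    rw [h3, ← Finset.sum_add_distrib]
    exact Finset.sum_congr rfl (fun i _ => by ring)
  rw [hsplit, Finset.mul_sum]
  refine Finset.sum_le_sum (fun i _ => ?_)
  exact mul_le_mul_of_nonneg_right (rowsum_le w hw0 hwsum Mx i) (sq_nonneg _)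

lemma Bf_nonneg (w : ℤ → ℝ) (hw0 : ∀ j, 0 ≤ w j) (hwsym : ∀ j, w (-j) = w j)
    (hwsum : Summable w) (Mx : ℤ) (x : ℤ → ℝ) : 0 ≤ Bf w Mx x x := by
  rw [Bf_expand]
  have h := (abs_le.1 (cross_abs_le w hw0 hwsym hwsum Mx x)).2
  have : ∑ i ∈ box Mx, x i * x i = ∑ i ∈ box Mx, x i ^ 2 :=
    Finset.sum_congr rfl (fun i _ => (sq (x i)).symm)
  rw [this]; linarith

lemma Bf_le (w : ℤ → ℝ) (hw0 : ∀ j, 0 ≤ w j) (hwsym : ∀ j, w (-j) = w j)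
    (hwsum : Summable w) (Mx : ℤ) (x : ℤ → ℝ) :
    Bf w Mx x x ≤ 2 * Swt w * ∑ i ∈ box Mx, x i ^ 2 := by
  rw [Bf_expand]
  have h := (abs_le.1 (cross_abs_le w hw0 hwsym hwsum Mx x)).1
  have : ∑ i ∈ box Mx, x i * x i = ∑ i ∈ box Mx, x i ^ 2 :=
    Finset.sum_congr rfl (fun i _ => (sq (x i)).symm)
  rw [this]; linarith

lemma Bf_cauchy (w : ℤ → ℝ) (hw0 : ∀ j, 0 ≤ w j) (hwsym : ∀ j, w (-j) = w j)
    (hwsum : Summable w) (Mx : ℤ) (x y : ℤ → ℝ) :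
    Bf w Mx x y ^ 2 ≤ Bf w Mx x x * Bf w Mx y y := by
  have hq : ∀ c : ℝ, 0 ≤ Bf w Mx y y * (c * c) + (2 * Bf w Mx x y) * c + Bf w Mx x x := by
    intro c
    have h0 := Bf_nonneg w hw0 hwsym hwsum Mx (fun i => x i + c * y i)
    have hexp : Bf w Mx (fun i => x i + c * y i) (fun i => x i + c * y i)
        = Bf w Mx y y * (c * c) + (2 * Bf w Mx x y) * c + Bf w Mx x x := by
      have e1 := Bf_add_left w Mx x (fun i => c * y i) (fun i => x i + c * y i)
      rw [e1, Bf_smul_left]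
      have e2 : ∀ z : ℤ → ℝ, Bf w Mx z (fun i => x i + c * y i)
          = Bf w Mx z x + c * Bf w Mx z y := by
        intro z
        rw [Bf_symm w hwsym Mx, Bf_add_left, Bf_smul_left, Bf_symm w hwsym Mx x z,
          Bf_symm w hwsym Mx y z]
      rw [e2 x, e2 y, Bf_symm w hwsym Mx y x]
      ring
    rw [hexp] at h0; exact h0
  have hd := discrim_le_zero hq
  unfold discrim at hd
  nlinarith

lemma Lop_sq_le (w : ℤ → ℝ) (hw0 : ∀ j, 0 ≤ w j) (hwsym : ∀ j, w (-j) = w j)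
    (hwsum : Summable w) (Mx : ℤ) (s : ℤ → ℝ) :
    ∑ i ∈ box Mx, (Lop w Mx s i) ^ 2 ≤ 2 * Swt w * Bf w Mx s s := by
  set X := ∑ i ∈ box Mx, (Lop w Mx s i) ^ 2 with hX
  have hX0 : 0 ≤ X := Finset.sum_nonneg (fun i _ => sq_nonneg _)
  rcases eq_or_lt_of_le hX0 with hX0' | hX0'
  · rw [← hX0']
    exact mul_nonneg (by linarith [Swt_nonneg w hw0]) (Bf_nonneg w hw0 hwsym hwsum Mx s)
  · set t := fun i => Lop w Mx s i with ht
    have hBst : Bf w Mx s t = X := by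
      unfold Bf
      exact Finset.sum_congr rfl (fun i _ => (sq (Lop w Mx s i)).symm)
    have hcs := Bf_cauchy w hw0 hwsym hwsum Mx s t
    have htt : Bf w Mx t t ≤ 2 * Swt w * X := Bf_le w hw0 hwsym hwsum Mx t
    rw [hBst] at hcs
    have h1 : Bf w Mx s s * Bf w Mx t t ≤ Bf w Mx s s * (2 * Swt w * X) :=
      mul_le_mul_of_nonneg_left htt (Bf_nonneg w hw0 hwsym hwsum Mx s)
    nlinarith [hcs, h1, hX0']

lemma abs_Lop_le (w : ℤ → ℝ) (hw0 : ∀ j, 0 ≤ w j) (hwsum : Summable w) (Mx : ℤ)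
    (x : ℤ → ℝ) (R : ℝ) (hx : ∀ k, |x k| ≤ R) (i : ℤ) :
    |Lop w Mx x i| ≤ 2 * Swt w * R := by
  have hR : 0 ≤ R := le_trans (abs_nonneg _) (hx 0)
  have hS := Swt_nonneg w hw0
  unfold Lop
  refine (abs_sub _ _).trans ?_
  have h1 : |Swt w * x i| ≤ Swt w * R := by
    rw [abs_mul, abs_of_nonneg hS]
    exact mul_le_mul_of_nonneg_left (hx i) hS
  have h2 : |∑ k ∈ box Mx, Wt w (i - k) * x k| ≤ Swt w * R := by
    refine (Finset.abs_sum_le_sum_abs _ _).trans ?_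
    have : ∀ k ∈ box Mx, |Wt w (i - k) * x k| ≤ Wt w (i - k) * R := by
      intro k _
      rw [abs_mul, abs_of_nonneg (Wt_nonneg w hw0 _)]
      exact mul_le_mul_of_nonneg_left (hx k) (Wt_nonneg w hw0 _)
    refine (Finset.sum_le_sum this).trans ?_
    rw [← Finset.sum_mul]
    exact mul_le_mul_of_nonneg_right (rowsum_le w hw0 hwsum Mx i) hR
  linarith

/-! ### opow lemmas -/

lemma opow_zero' (r : ℝ) : opow 0 r = 0 := by simp [opow]

lemma opow_neg' (x r : ℝ) : opow (-x) r = -opow x r := by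
  simp [opow]

lemma rpow_sub_one_mul {x : ℝ} (hx : 0 < x) (r : ℝ) : x ^ (r - 1) * x = x ^ r := by
  nth_rewrite 2 [← Real.rpow_one x]
  rw [← Real.rpow_add hx]
  congr 1; ring

lemma opow_of_nonneg {x : ℝ} (hx : 0 ≤ x) {r : ℝ} (hr : 0 < r) : opow x r = x ^ r := by
  rcases eq_or_lt_of_le hx with hx0 | hx0
  · rw [← hx0, opow_zero', Real.zero_rpow (ne_of_gt hr)]
  · unfold opow
    rw [abs_of_pos hx0, rpow_sub_one_mul hx0]

lemma opow_pos {x : ℝ} (hx : 0 < x) (r : ℝ) : 0 < opow x r := by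
  unfold opow
  exact mul_pos (Real.rpow_pos_of_pos (abs_pos.2 (ne_of_gt hx)) _) hx

lemma abs_opow (x : ℝ) {r : ℝ} (hr : 0 < r) : |opow x r| = |x| ^ r := by
  rcases eq_or_ne x 0 with rfl | hx
  · rw [opow_zero', abs_zero, Real.zero_rpow (ne_of_gt hr)]
  · unfold opow
    rw [abs_mul, abs_of_nonneg (Real.rpow_nonneg (abs_nonneg x) _),
      rpow_sub_one_mul (abs_pos.2 hx)]

lemma opow_strictMono {r : ℝ} (hr : 0 < r) : StrictMono (fun x => opow x r) := by
  intro a b hab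
  simp only
  rcases le_or_gt 0 a with ha | ha
  · rw [opow_of_nonneg ha hr, opow_of_nonneg (le_trans ha (le_of_lt hab)) hr]
    exact Real.rpow_lt_rpow ha hab hr
  · rcases le_or_gt b 0 with hb | hb
    · have h1 : opow a r = -opow (-a) r := by rw [opow_neg', neg_neg]
      have h2 : opow b r = -opow (-b) r := by rw [opow_neg', neg_neg]
      rw [h1, h2, neg_lt_neg_iff]
      rw [opow_of_nonneg (by linarith : (0:ℝ) ≤ -b) hr,
        opow_of_nonneg (by linarith : (0:ℝ) ≤ -a) hr]
      exact Real.rpow_lt_rpow (by linarith) (by linarith) hr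
    · have h1 : opow a r < 0 := by
        have := opow_pos (by linarith : (0:ℝ) < -a) r
        rw [opow_neg'] at this; linarith
      exact lt_trans h1 (opow_pos hb r)

lemma opow_mono {r : ℝ} (hr : 0 < r) : Monotone (fun x => opow x r) :=
  (opow_strictMono hr).monotone

lemma opow_diff_mul_nonneg {r : ℝ} (hr : 0 < r) (a b : ℝ) :
    0 ≤ (opow a r - opow b r) * (a - b) := by
  rcases le_total a b with hab | hab
  · have := opow_mono hr hab
    simp only at this
    nlinarith
  · have := opow_mono hr hab
    simp only at this
    nlinarith

lemma opow_opow {r : ℝ} (hr : 0 < r) (x : ℝ) : opow (opow x r) (1 / r) = x := by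
  have hr' : (0:ℝ) < 1 / r := by positivity
  have key : ∀ z : ℝ, 0 ≤ z → opow (opow z r) (1 / r) = z := by
    intro z hz
    rw [opow_of_nonneg hz hr, opow_of_nonneg (Real.rpow_nonneg hz r) hr',
      ← Real.rpow_mul hz, mul_one_div, div_self (ne_of_gt hr), Real.rpow_one]
  rcases le_or_gt 0 x with hx | hx
  · exact key x hx
  · have : opow x r = -opow (-x) r := by rw [opow_neg', neg_neg]
    rw [this, opow_neg', key (-x) (by linarith), neg_neg]

lemma continuous_opow {r : ℝ} (hr : 0 < r) : Continuous (fun x => opow x r) := by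
  rw [continuous_iff_continuousAt]
  intro x
  rcases eq_or_ne x 0 with rfl | hx
  · rw [ContinuousAt, opow_zero']
    have habs : Filter.Tendsto (fun y : ℝ => |y| ^ r) (nhds 0) (nhds 0) := by
      have h1 : Filter.Tendsto (fun y : ℝ => |y|) (nhds 0) (nhds 0) := by
        simpa using continuous_abs.tendsto (0:ℝ)
      have h2 : Filter.Tendsto (fun z : ℝ => z ^ r) (nhds 0) (nhds 0) := by
        have := (Real.continuousAt_rpow_const 0 r (Or.inr (le_of_lt hr)))
        simpa [Real.zero_rpow (ne_of_gt hr)] using this.tendsto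
      exact h2.comp h1
    refine squeeze_zero_norm (fun y => ?_) habs
    rw [Real.norm_eq_abs, abs_opow y hr]
  · have h1 : ContinuousAt (fun y : ℝ => |y| ^ (r - 1)) x := by
      have := (Real.continuousAt_rpow_const |x| (r - 1) (Or.inl (abs_ne_zero.2 hx)))
      exact this.comp (continuous_abs.continuousAt)
    exact h1.mul continuousAt_id

lemma opow_inv_mod {r : ℝ} (hr : 0 < r) (R ε : ℝ) (hR : 0 ≤ R) (hε : 0 < ε) :
    ∃ η : ℝ, 0 < η ∧ ∀ a b : ℝ, |a| ≤ R → |b| ≤ R →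
      |opow a r - opow b r| ≤ η → |a - b| ≤ ε := by
  have hr' : (0:ℝ) < 1 / r := by positivity
  set K := Set.Icc (-(R ^ r)) (R ^ r) with hK
  have hKc : IsCompact K := isCompact_Icc
  have hUC : UniformContinuousOn (fun y => opow y (1 / r)) K :=
    hKc.uniformContinuousOn_of_continuous (continuous_opow hr').continuousOn
  obtain ⟨δ, hδ0, hδ⟩ := (Metric.uniformContinuousOn_iff).1 hUC ε hε
  refine ⟨δ / 2, by positivity, fun a b ha hb hab => ?_⟩
  have hmem : ∀ c : ℝ, |c| ≤ R → opow c r ∈ K := by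
    intro c hc
    have : |opow c r| ≤ R ^ r := by
      rw [abs_opow c hr]
      exact Real.rpow_le_rpow (abs_nonneg c) hc (le_of_lt hr)
    exact Set.mem_Icc.2 (abs_le.1 this)
  have := hδ _ (hmem a ha) _ (hmem b hb)
    (by rw [Real.dist_eq]; exact lt_of_le_of_lt hab (by linarith))
  rw [Real.dist_eq, opow_opow hr, opow_opow hr] at this
  exact le_of_lt this

lemma linf_bound (q Δt : ℝ) (hq : 1 < q) (hΔt : 0 < Δt)
    (w : ℤ → ℝ) (hw0 : ∀ j, 0 ≤ w j)
    (Mx : ℤ) (hMx : 1 ≤ Mx) (u0 : ℤ → ℝ) (u : ℕ → ℤ → ℝ)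
    (hFD : IsFD q Δt w Mx u0 u)
    (R0 : ℝ) (hR0 : ∀ k, |u0 k| ≤ R0) :
    ∀ n k, |u n k| ≤ R0 := by
  have hr : (0:ℝ) < q - 1 := by linarith
  have hR0' : 0 ≤ R0 := le_trans (abs_nonneg _) (hR0 0)
  have hbox : (box Mx).Nonempty := ⟨0, mem_box.2 (by simpa using by linarith : |(0:ℤ)| ≤ Mx)⟩
  intro n
  induction n with
  | zero => intro k; rw [hFD.1]; exact hR0 k
  | succ n ih =>
    obtain ⟨i0, hi0m, hi0⟩ := Finset.exists_max_image (box Mx) (fun i => |u (n+1) i|) hbox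
    set a := u (n + 1) i0 with haa
    have hub : ∀ m : ℤ, u (n+1) m ≤ |a| ∧ -|a| ≤ u (n+1) m := by
      intro m
      by_cases hm : m ∈ box Mx
      · have := hi0 m hm
        constructor <;> [exact le_trans (le_abs_self _) this;
          exact le_trans (neg_le_neg this) (neg_abs_le _)]
      · rw [hFD.2.1 (n+1) m (lt_of_not_ge (fun hc => hm (mem_box.2 hc)))]
        constructor <;> simp
    have hia : |i0| ≤ Mx := mem_box.1 hi0m
    have heq := hFD.2.2 n i0 hia
    have heq2 : opow a (q-1) = opow (u n i0) (q-1) - Δt * discLap w (u (n+1)) i0 := by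
      field_simp at heq
      linarith [heq]
    have hmain : |a| ≤ R0 := by
      rcases le_or_gt 0 a with ha | ha
      · have hD : 0 ≤ discLap w (u (n+1)) i0 := by
          refine tsum_nonneg (fun j => ?_)
          split
          · exact le_rfl
          · refine mul_nonneg (hw0 j) ?_
            have := (hub (i0 - j)).1
            rw [abs_of_nonneg ha] at this
            linarith
        have h1 : opow a (q-1) ≤ opow R0 (q-1) := by
          calc opow a (q-1) ≤ opow (u n i0) (q-1) := by nlinarith [mul_nonneg (le_of_lt hΔt) hD]
          _ ≤ opow R0 (q-1) := opow_mono hr (le_trans (le_abs_self _) (ih i0))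
        rw [abs_of_nonneg ha]
        exact ((opow_strictMono hr).le_iff_le).1 h1
      · have hD : discLap w (u (n+1)) i0 ≤ 0 := by
          have hterm : ∀ j : ℤ, 0 ≤ -(if j = 0 then 0 else w j * (u (n+1) i0 - u (n+1) (i0 - j))) := by
            intro j
            rw [neg_nonneg]
            split
            · exact le_rfl
            · refine mul_nonpos_of_nonneg_of_nonpos (hw0 j) ?_
              have := (hub (i0 - j)).2
              rw [abs_of_neg ha] at this
              linarith
          have hns := tsum_nonneg (L := SummationFilter.unconditional ℤ) hterm
          rw [tsum_neg] at hns
          have hdef : discLap w (u (n+1)) i0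
              = ∑' j : ℤ, (if j = 0 then 0 else w j * (u (n+1) i0 - u (n+1) (i0 - j))) := rfl
          rw [hdef]
          linarith
        have h1 : opow (-R0) (q-1) ≤ opow a (q-1) := by
          calc opow (-R0) (q-1) ≤ opow (u n i0) (q-1) :=
              opow_mono hr (by linarith [(abs_le.1 (ih i0)).1])
          _ ≤ opow a (q-1) := by nlinarith [mul_nonpos_of_nonneg_of_nonpos (le_of_lt hΔt) hD]
        have h2 : -R0 ≤ a := ((opow_strictMono hr).le_iff_le).1 h1
        rw [abs_of_neg ha]
        linarith
    intro k
    by_cases hk : k ∈ box Mx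
    · exact le_trans (hi0 k hk) hmain
    · rw [hFD.2.1 (n+1) k (lt_of_not_ge (fun hc => hk (mem_box.2 hc)))]
      simpa using hR0'

noncomputable def rho (Δt : ℝ) (u : ℕ → ℤ → ℝ) (v : ℤ → ℝ → ℝ) (n : ℕ) (i : ℤ) : ℝ :=
  ∫ s in ((n : ℝ) * Δt)..(((n : ℝ) + 1) * Δt), (u (n + 1) i - v i s)

noncomputable def acc (Δt : ℝ) (u : ℕ → ℤ → ℝ) (v : ℤ → ℝ → ℝ) (n : ℕ) (i : ℤ) : ℝ :=
  ∑ m ∈ Finset.range n, rho Δt u v m i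

set_option maxHeartbeats 2000000 in
lemma main_estimate (q : ℝ) (hq : 1 < q)
    (Mx : ℤ) (hMx : 1 ≤ Mx)
    (w : ℤ → ℝ) (hw0 : ∀ j, 0 ≤ w j) (hwsym : ∀ j, w (-j) = w j) (hwsum : Summable w)
    (u0 : ℤ → ℝ)
    (Δt : ℝ) (hΔt : 0 < Δt)
    (u : ℕ → ℤ → ℝ) (hFD : IsFD q Δt w Mx u0 u)
    (v : ℤ → ℝ → ℝ) (hv : IsSD q w Mx u0 v)
    (T' R : ℝ) (hR : 0 ≤ R)
    (hRu : ∀ n k, |u n k| ≤ R)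
    (hRv : ∀ k t, 0 ≤ t → t ≤ T' → |v k t| ≤ R) :
    ∀ m : ℕ, (m : ℝ) * Δt ≤ T' → ∀ k, |k| ≤ Mx →
      (opow (u m k) (q-1) - opow (v k ((m : ℝ) * Δt)) (q-1)) ^ 2
        ≤ 2 * Swt w * ((2 * Swt w * (box Mx).card * (2*R)^2
            + 8 * (2 * Swt w * R) * R * (box Mx).card) * m * Δt ^ 2) := by
  have hr : (0:ℝ) < q - 1 := by linarith
  set S := Swt w with hSdef
  have hS : 0 ≤ S := Swt_nonneg w hw0
  set CL := 2 * S * R with hCLdef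
  have hCL : 0 ≤ CL := by positivity
  -- support facts
  have hsuppu : ∀ n k, k ∉ box Mx → u n k = 0 := by
    intro n k hk
    exact hFD.2.1 n k (lt_of_not_ge (fun hc => hk (mem_box.2 hc)))
  have hsuppv : ∀ k, k ∉ box Mx → ∀ t : ℝ, 0 ≤ t → v k t = 0 := by
    intro k hk t ht
    exact hv.2.1 k (lt_of_not_ge (fun hc => hk (mem_box.2 hc))) t ht
  have hcv : ∀ k, ContinuousOn (v k) (Set.Ici 0) := hv.1
  -- continuity of Lop applied to v
  have hcontg : ∀ k, ContinuousOn (fun s => Lop w Mx (fun j => v j s) k) (Set.Ici (0:ℝ)) := by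
    intro k
    have h0 : (fun s => Lop w Mx (fun j => v j s) k)
        = fun s => Swt w * v k s - ∑ j ∈ box Mx, Wt w (k - j) * v j s := by
      funext s; rfl
    rw [h0]
    exact (continuousOn_const.mul (hcv k)).sub
      (continuousOn_finset_sum _ (fun j _ => continuousOn_const.mul (hcv j)))
  -- interval integrability helper
  have hII : ∀ (f : ℝ → ℝ) (a b : ℝ), 0 ≤ a → 0 ≤ b → ContinuousOn f (Set.Ici 0) →
      IntervalIntegrable f MeasureTheory.volume a b := by
    intro f a b ha hb hf
    refine (hf.mono ?_).intervalIntegrable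
    intro s hs
    rcases Set.mem_uIcc.1 hs with h | h
    · exact le_trans (le_min ha hb) (le_trans (min_le_left a b) h.1)
    · exact le_trans (le_min ha hb) (le_trans (min_le_right a b) h.1)
  -- SD equation in Lop form
  have hz : ∀ k : ℤ, |k| ≤ Mx → ∀ t1 t2 : ℝ, 0 ≤ t1 → t1 ≤ t2 →
      opow (v k t2) (q-1) = opow (v k t1) (q-1)
        - ∫ s in t1..t2, Lop w Mx (fun j => v j s) k := by
    intro k hk t1 t2 ht1 ht12
    have ht2 : 0 ≤ t2 := le_trans ht1 ht12
    have hce : ∀ t : ℝ, 0 ≤ t →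
        (∫ s in (0:ℝ)..t, discLap w (fun j => v j s) k)
          = ∫ s in (0:ℝ)..t, Lop w Mx (fun j => v j s) k := by
      intro t ht
      refine intervalIntegral.integral_congr (fun s hs => ?_)
      have hs0 : 0 ≤ s := by
        rcases Set.mem_uIcc.1 hs with h | h
        · exact h.1
        · exact le_trans ht h.1
      exact discLap_eq_Lop w hw0 hwsum Mx _ (fun j hj => hsuppv j hj s hs0) k
    have e1 := hv.2.2.2 k hk t1 ht1
    have e2 := hv.2.2.2 k hk t2 ht2
    rw [hce t1 ht1] at e1
    rw [hce t2 ht2] at e2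
    have hsub := intervalIntegral.integral_interval_sub_left
      (hII _ 0 t2 le_rfl ht2 (hcontg k)) (hII _ 0 t1 le_rfl ht1 (hcontg k))
    rw [e1, e2, ← hsub]
    ring
  -- FD equation in Lop form
  have hy : ∀ n : ℕ, ∀ k : ℤ, |k| ≤ Mx →
      opow (u (n+1) k) (q-1) = opow (u n k) (q-1) - Δt * Lop w Mx (u (n+1)) k := by
    intro n k hk
    have heq := hFD.2.2 n k hk
    rw [discLap_eq_Lop w hw0 hwsum Mx _ (hsuppu (n+1)) k] at heq
    field_simp at heq
    linarith
  -- rho basics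
  have htm : ∀ n : ℕ, (0:ℝ) ≤ (n:ℝ) * Δt := fun n => by positivity
  have htm2 : ∀ n : ℕ, (n:ℝ) * Δt ≤ ((n:ℝ)+1) * Δt := fun n => by nlinarith
  have hrho0 : ∀ n k, k ∉ box Mx → rho Δt u v n k = 0 := by
    intro n k hk
    unfold rho
    have : ∀ s ∈ Set.uIcc ((n:ℝ) * Δt) (((n:ℝ)+1) * Δt),
        u (n+1) k - v k s = (0:ℝ) := by
      intro s hs
      have hs0 : 0 ≤ s := by
        rcases Set.mem_uIcc.1 hs with h | h
        · exact le_trans (htm n) h.1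
        · exact le_trans (le_trans (htm n) (htm2 n)) h.1
      rw [hsuppu (n+1) k hk, hsuppv k hk s hs0]; ring
    rw [intervalIntegral.integral_congr this, intervalIntegral.integral_zero]
  have hIIv : ∀ (k : ℤ) (a b : ℝ), 0 ≤ a → 0 ≤ b →
      IntervalIntegrable (fun s => v k s) MeasureTheory.volume a b := by
    intro k a b ha hb; exact hII _ a b ha hb (hcv k)
  have hrho_bound : ∀ n : ℕ, ∀ k, ((n:ℝ)+1) * Δt ≤ T' → |rho Δt u v n k| ≤ 2 * R * Δt := by
    intro n k hnT
    unfold rho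
    have hb : ∀ s ∈ Set.uIoc ((n:ℝ) * Δt) (((n:ℝ)+1) * Δt),
        ‖u (n+1) k - v k s‖ ≤ 2 * R := by
      intro s hs
      rw [Set.uIoc_of_le (htm2 n)] at hs
      have hs0 : 0 ≤ s := le_trans (htm n) (le_of_lt hs.1)
      have hsT : s ≤ T' := le_trans hs.2 hnT
      rw [Real.norm_eq_abs]
      calc |u (n+1) k - v k s| ≤ |u (n+1) k| + |v k s| := abs_sub _ _
      _ ≤ R + R := add_le_add (hRu (n+1) k) (hRv k s hs0 hsT)
      _ = 2 * R := by ring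
    have := intervalIntegral.norm_integral_le_of_norm_le_const hb
    rw [Real.norm_eq_abs] at this
    refine this.trans ?_
    have : |((n:ℝ)+1) * Δt - (n:ℝ) * Δt| = Δt := by
      rw [abs_of_nonneg (by nlinarith)]; ring
    rw [this]
  -- rho in split form
  have hrho_split : ∀ n k, rho Δt u v n k
      = Δt * u (n+1) k - ∫ s in ((n:ℝ) * Δt)..(((n:ℝ)+1) * Δt), v k s := by
    intro n k
    unfold rho
    rw [intervalIntegral.integral_sub intervalIntegrable_const
      (hIIv k _ _ (htm n) (le_trans (htm n) (htm2 n)))]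
    rw [intervalIntegral.integral_const]
    rw [smul_eq_mul]
    ring_nf
  -- Lop of rho
  have hLrho : ∀ n k, Lop w Mx (fun i => rho Δt u v n i) k
      = Δt * Lop w Mx (u (n+1)) k
        - ∫ s in ((n:ℝ) * Δt)..(((n:ℝ)+1) * Δt), Lop w Mx (fun j => v j s) k := by
    intro n k
    have ha := htm n
    have hb := le_trans (htm n) (htm2 n)
    have hint1 : (∫ s in ((n:ℝ) * Δt)..(((n:ℝ)+1) * Δt), Lop w Mx (fun j => v j s) k)
        = S * (∫ s in ((n:ℝ) * Δt)..(((n:ℝ)+1) * Δt), v k s)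
          - ∑ j ∈ box Mx, Wt w (k - j) * (∫ s in ((n:ℝ) * Δt)..(((n:ℝ)+1) * Δt), v j s) := by
      have h0 : (fun s => Lop w Mx (fun j => v j s) k)
          = fun s => Swt w * v k s - ∑ j ∈ box Mx, Wt w (k - j) * v j s := by
        funext s; rfl
      have hgc : ContinuousOn (fun s => ∑ j ∈ box Mx, Wt w (k - j) * v j s) (Set.Ici (0:ℝ)) :=
        continuousOn_finset_sum _ (fun j _ => continuousOn_const.mul (hcv j))
      have hg := hII _ _ _ ha hb hgc
      rw [h0, intervalIntegral.integral_sub ((hIIv k _ _ ha hb).const_mul _) hg,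
        intervalIntegral.integral_const_mul,
        intervalIntegral.integral_finset_sum (fun j _ => (hIIv j _ _ ha hb).const_mul _)]
      congr 1
      exact Finset.sum_congr rfl (fun j _ => intervalIntegral.integral_const_mul _ _)
    rw [hint1]
    simp only [Lop]
    rw [hrho_split n k]
    have hsum : ∑ j ∈ box Mx, Wt w (k - j) * rho Δt u v n j
        = Δt * (∑ j ∈ box Mx, Wt w (k - j) * u (n+1) j)
          - ∑ j ∈ box Mx, Wt w (k - j) * (∫ s in ((n:ℝ) * Δt)..(((n:ℝ)+1) * Δt), v j s) := by
      rw [Finset.mul_sum, ← Finset.sum_sub_distrib]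
      refine Finset.sum_congr rfl (fun j _ => ?_)
      rw [hrho_split n j]
      ring
    rw [hsum]
    ring
  -- error identity
  have herr : ∀ n : ℕ, ∀ k, |k| ≤ Mx →
      opow (u n k) (q-1) - opow (v k ((n:ℝ) * Δt)) (q-1)
        = -(Lop w Mx (acc Δt u v n) k) := by
    intro n
    induction n with
    | zero =>
      intro k _
      have hacc : acc Δt u v 0 = fun _ => (0:ℝ) := by
        funext i; simp [acc]
      rw [hacc]
      have hL0 : Lop w Mx (fun _ => (0:ℝ)) k = 0 := by
        unfold Lop; simp
      rw [hL0, hFD.1]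
      have : (((0:ℕ)):ℝ) * Δt = 0 := by push_cast; ring
      rw [this, hv.2.2.1 k]
      ring
    | succ n ih =>
      intro k hk
      have e1 := hy n k hk
      have e2 := hz k hk ((n:ℝ) * Δt) (((n:ℝ)+1) * Δt) (htm n) (htm2 n)
      have e3 := ih k hk
      have hacc : acc Δt u v (n+1) = fun i => acc Δt u v n i + rho Δt u v n i := by
        funext i; simp [acc, Finset.sum_range_succ]
      rw [hacc, Lop_add]
      have hcast : (((n+1:ℕ)):ℝ) * Δt = ((n:ℝ)+1) * Δt := by push_cast; ring
      rw [hcast, e1, e2, hLrho n k]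
      linarith
  -- N bound by induction
  have hboxcard : (0:ℝ) ≤ ((box Mx).card : ℝ) := Nat.cast_nonneg _
  set C1 := 2 * S * ((box Mx).card : ℝ) * (2*R)^2 with hC1def
  set C2 := 8 * CL * R * ((box Mx).card : ℝ) with hC2def
  have hC1 : 0 ≤ C1 := by positivity
  have hC2 : 0 ≤ C2 := by positivity
  have hN : ∀ m : ℕ, (m:ℝ) * Δt ≤ T' →
      Bf w Mx (acc Δt u v m) (acc Δt u v m) ≤ (C1 + C2) * m * Δt^2 := by
    intro m
    induction m with
    | zero =>
      intro _
      have hacc : acc Δt u v 0 = fun _ => (0:ℝ) := by funext i; simp [acc]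
      rw [hacc]
      have : Bf w Mx (fun _ => (0:ℝ)) (fun _ => (0:ℝ)) = 0 := by
        unfold Bf Lop; simp
      rw [this]
      simp
    | succ m ih =>
      intro hmT
      have hmT' : (m:ℝ) * Δt ≤ T' := by
        refine le_trans ?_ hmT
        push_cast
        nlinarith
      have hmT2 : ((m:ℝ)+1) * Δt ≤ T' := by
        refine le_trans (le_of_eq ?_) hmT
        push_cast; ring
      have hIH := ih hmT'
      have hacc : acc Δt u v (m+1) = fun i => acc Δt u v m i + rho Δt u v m i := by
        funext i; simp [acc, Finset.sum_range_succ]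
      have hexpand : Bf w Mx (acc Δt u v (m+1)) (acc Δt u v (m+1))
          = Bf w Mx (acc Δt u v m) (acc Δt u v m)
            + 2 * Bf w Mx (acc Δt u v m) (fun i => rho Δt u v m i)
            + Bf w Mx (fun i => rho Δt u v m i) (fun i => rho Δt u v m i) := by
        rw [hacc]
        rw [Bf_add_left]
        have h2 : ∀ z : ℤ → ℝ, Bf w Mx z (fun i => acc Δt u v m i + rho Δt u v m i)
            = Bf w Mx z (acc Δt u v m) + Bf w Mx z (fun i => rho Δt u v m i) := by
          intro z
          rw [Bf_symm w hwsym Mx, Bf_add_left, Bf_symm w hwsym Mx (acc Δt u v m) z,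
            Bf_symm w hwsym Mx (fun i => rho Δt u v m i) z]
        rw [h2, h2, Bf_symm w hwsym Mx (fun i => rho Δt u v m i) (acc Δt u v m)]
        ring
      -- bound Bf(rho, rho)
      have hBrho : Bf w Mx (fun i => rho Δt u v m i) (fun i => rho Δt u v m i) ≤ C1 * Δt^2 := by
        refine (Bf_le w hw0 hwsym hwsum Mx _).trans ?_
        have hsum : ∑ i ∈ box Mx, (rho Δt u v m i)^2
            ≤ ((box Mx).card : ℝ) * (2*R*Δt)^2 := by
          have := Finset.sum_le_card_nsmul (box Mx) (fun i => (rho Δt u v m i)^2)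
            ((2*R*Δt)^2) (fun i _ => by
              have h1 := hrho_bound m i hmT2
              have h3 := pow_le_pow_left₀ (abs_nonneg (rho Δt u v m i)) h1 2
              rwa [sq_abs] at h3)
          simpa [nsmul_eq_mul] using this
        calc 2 * Swt w * ∑ i ∈ box Mx, (rho Δt u v m i)^2
            ≤ 2 * Swt w * (((box Mx).card : ℝ) * (2*R*Δt)^2) := by
              refine mul_le_mul_of_nonneg_left hsum (by positivity)
        _ = C1 * Δt^2 := by rw [hC1def]; ring
      -- bound cross term
      have hcross : 2 * Bf w Mx (acc Δt u v m) (fun i => rho Δt u v m i) ≤ C2 * Δt^2 := by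
        have hterm : ∀ i ∈ box Mx,
            Lop w Mx (acc Δt u v m) i * rho Δt u v m i ≤ 4 * CL * R * Δt^2 := by
          intro i him
          have hi : |i| ≤ Mx := mem_box.1 him
          have he := herr m i hi
          set E := opow (u m i) (q-1) - opow (v i ((m:ℝ) * Δt)) (q-1) with hEdef
          have hEL : Lop w Mx (acc Δt u v m) i = -E := by rw [he]; ring
          -- pointwise bound
          have ha := htm m
          have hb := le_trans (htm m) (htm2 m)
          have hpt : ∀ s ∈ Set.Icc ((m:ℝ) * Δt) (((m:ℝ)+1) * Δt),
              -(4 * CL * R * Δt) ≤ E * (u (m+1) i - v i s) := by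
            intro s hs
            have hs0 : (0:ℝ) ≤ s := le_trans ha hs.1
            have hsT : s ≤ T' := le_trans hs.2 hmT2
            have hA : 0 ≤ (opow (u (m+1) i) (q-1) - opow (v i s) (q-1))
                * (u (m+1) i - v i s) := opow_diff_mul_nonneg hr _ _
            have hB : |opow (u m i) (q-1) - opow (u (m+1) i) (q-1)| ≤ Δt * CL := by
              have := hy m i hi
              have habs : opow (u m i) (q-1) - opow (u (m+1) i) (q-1)
                  = Δt * Lop w Mx (u (m+1)) i := by linarith
              rw [habs, abs_mul, abs_of_nonneg (le_of_lt hΔt)]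
              refine mul_le_mul_of_nonneg_left ?_ (le_of_lt hΔt)
              rw [hCLdef, hSdef]
              exact abs_Lop_le w hw0 hwsum Mx _ R (fun kk => hRu (m+1) kk) i
            have hC : |opow (v i s) (q-1) - opow (v i ((m:ℝ) * Δt)) (q-1)| ≤ CL * Δt := by
              have hzz := hz i hi ((m:ℝ) * Δt) s ha hs.1
              have habs : opow (v i s) (q-1) - opow (v i ((m:ℝ) * Δt)) (q-1)
                  = -∫ τ in ((m:ℝ) * Δt)..s, Lop w Mx (fun j => v j τ) i := by linarith
              rw [habs, abs_neg]
              have hbound : ∀ τ ∈ Set.uIoc ((m:ℝ) * Δt) s,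
                  ‖Lop w Mx (fun j => v j τ) i‖ ≤ CL := by
                intro τ hτ
                rw [Set.uIoc_of_le hs.1] at hτ
                have hτ0 : (0:ℝ) ≤ τ := le_trans ha (le_of_lt hτ.1)
                have hτT : τ ≤ T' := le_trans hτ.2 hsT
                rw [Real.norm_eq_abs, hCLdef, hSdef]
                exact abs_Lop_le w hw0 hwsum Mx _ R (fun kk => hRv kk τ hτ0 hτT) i
              have h2 := intervalIntegral.norm_integral_le_of_norm_le_const hbound
              rw [Real.norm_eq_abs] at h2
              refine h2.trans ?_
              have : |s - (m:ℝ) * Δt| ≤ Δt := by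
                rw [abs_of_nonneg (by linarith [hs.1])]
                have := hs.2; nlinarith
              calc CL * |s - (m:ℝ)*Δt| ≤ CL * Δt := mul_le_mul_of_nonneg_left this hCL
              _ = CL * Δt := rfl
            have huv : |u (m+1) i - v i s| ≤ 2 * R := by
              calc |u (m+1) i - v i s| ≤ |u (m+1) i| + |v i s| := abs_sub _ _
              _ ≤ R + R := add_le_add (hRu (m+1) i) (hRv i s hs0 hsT)
              _ = 2 * R := by ring
            -- combine
            have hdecomp : E = (opow (u (m+1) i) (q-1) - opow (v i s) (q-1))
                + (opow (u m i) (q-1) - opow (u (m+1) i) (q-1))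
                + (opow (v i s) (q-1) - opow (v i ((m:ℝ) * Δt)) (q-1)) := by
              rw [hEdef]; ring
            set A := opow (u (m+1) i) (q-1) - opow (v i s) (q-1)
            set B := opow (u m i) (q-1) - opow (u (m+1) i) (q-1)
            set Cc := opow (v i s) (q-1) - opow (v i ((m:ℝ) * Δt)) (q-1)
            have hBC : |(B + Cc) * (u (m+1) i - v i s)| ≤ (Δt * CL + CL * Δt) * (2 * R) := by
              rw [abs_mul]
              refine mul_le_mul ((abs_add_le _ _).trans (add_le_add hB hC)) huv (abs_nonneg _) ?_
              positivity
            have hBC' := (abs_le.1 hBC).1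
            have hEexp : E * (u (m+1) i - v i s)
                = A * (u (m+1) i - v i s) + (B + Cc) * (u (m+1) i - v i s) := by
              rw [hdecomp]; ring
            rw [hEexp]
            nlinarith [hA, hBC']
          -- integrate
          have hInt : IntervalIntegrable (fun s => E * (u (m+1) i - v i s))
              MeasureTheory.volume ((m:ℝ) * Δt) (((m:ℝ)+1) * Δt) :=
            ((intervalIntegrable_const).sub (hIIv i _ _ ha hb)).const_mul E
          have hmono := intervalIntegral.integral_mono_on (htm2 m)
            (intervalIntegrable_const) hInt hpt
          rw [intervalIntegral.integral_const, smul_eq_mul] at hmono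
          have hErho : E * rho Δt u v m i
              = ∫ s in ((m:ℝ) * Δt)..(((m:ℝ)+1) * Δt), E * (u (m+1) i - v i s) := by
            unfold rho
            rw [intervalIntegral.integral_const_mul]
          have hgoal : -(4 * CL * R * Δt^2) ≤ E * rho Δt u v m i := by
            rw [hErho]
            refine le_trans (le_of_eq ?_) hmono
            ring
          rw [hEL]
          nlinarith [hgoal]
        have hsum := Finset.sum_le_card_nsmul (box Mx) _ _ hterm
        rw [nsmul_eq_mul] at hsum
        have hBfv : Bf w Mx (acc Δt u v m) (fun i => rho Δt u v m i)
            = ∑ i ∈ box Mx, Lop w Mx (acc Δt u v m) i * rho Δt u v m i := rfl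
        rw [hC2def]
        calc 2 * Bf w Mx (acc Δt u v m) (fun i => rho Δt u v m i)
            ≤ 2 * (((box Mx).card : ℝ) * (4 * CL * R * Δt^2)) := by
              rw [hBfv]; linarith [hsum]
        _ = 8 * CL * R * ((box Mx).card : ℝ) * Δt^2 := by ring
      rw [hexpand]
      have : (C1 + C2) * (↑(m+1)) * Δt^2 = (C1+C2) * m * Δt^2 + C1 * Δt^2 + C2 * Δt^2 := by
        push_cast; ring
      rw [this]
      linarith
  -- conclusion
  intro m hmT k hk
  have he := herr m k hk
  have hksq : (opow (u m k) (q-1) - opow (v k ((m:ℝ) * Δt)) (q-1))^2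
      = (Lop w Mx (acc Δt u v m) k)^2 := by
    rw [he]; ring
  rw [hksq]
  have hmem : k ∈ box Mx := mem_box.2 hk
  have h1 : (Lop w Mx (acc Δt u v m) k)^2 ≤ ∑ i ∈ box Mx, (Lop w Mx (acc Δt u v m) i)^2 :=
    Finset.single_le_sum (f := fun i => (Lop w Mx (acc Δt u v m) i)^2)
      (fun i _ => sq_nonneg _) hmem
  refine h1.trans ?_
  refine (Lop_sq_le w hw0 hwsym hwsum Mx _).trans ?_
  have := hN m hmT
  calc 2 * S * Bf w Mx (acc Δt u v m) (acc Δt u v m)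
      ≤ 2 * S * ((C1 + C2) * m * Δt^2) := by
        refine mul_le_mul_of_nonneg_left (hN m hmT) (by positivity)
  _ = 2 * Swt w * ((2 * Swt w * (box Mx).card * (2*R)^2
        + 8 * (2 * Swt w * R) * R * (box Mx).card) * m * Δt ^ 2) := by
        rw [hC1def, hC2def, hCLdef, hSdef]

set_option maxHeartbeats 1000000 in
theorem stmt19 (q h : ℝ) (hq : 1 < q) (hh : 0 < h)
    (Mx : ℤ) (hMx : 1 ≤ Mx)
    (w : ℤ → ℝ) (hw0 : ∀ j : ℤ, 0 ≤ w j) (hwsym : ∀ j : ℤ, w (-j) = w j) (hwsum : Summable w)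
    (u0 : ℤ → ℝ) (hu0 : ∀ i : ℤ, Mx < |i| → u0 i = 0)
    (U : ℝ → ℕ → ℤ → ℝ) (hU : ∀ Δt : ℝ, 0 < Δt → IsFD q Δt w Mx u0 (U Δt))
    (v : ℤ → ℝ → ℝ) (hv : IsSD q w Mx u0 v) :
    ∀ i : ℤ, ∀ T : ℝ, 0 < T → ∀ ε : ℝ, 0 < ε →
      ∃ δ : ℝ, 0 < δ ∧
        ∀ Δt : ℝ, 0 < Δt → Δt < δ →
          ∀ t ∈ Set.Icc (0 : ℝ) T, |interp Δt u0 (U Δt) i t - v i t| ≤ ε := by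
  intro i T hT ε hε
  rcases lt_or_ge Mx |i| with hi | hi
  · -- outside the box: everything is zero
    refine ⟨1, one_pos, fun Δt hΔt _ t ht => ?_⟩
    have hvz : v i t = 0 := hv.2.1 i hi t ht.1
    have : interp Δt u0 (U Δt) i t = 0 := by
      unfold interp
      split
      · exact hu0 i hi
      · exact (hU Δt hΔt).2.1 _ i hi
    rw [this, hvz]
    simpa using le_of_lt hε
  -- main case
  have hr : (0:ℝ) < q - 1 := by linarith
  have hbox : (box Mx).Nonempty := ⟨0, mem_box.2 (by simpa using by linarith : |(0:ℤ)| ≤ Mx)⟩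
  -- uniform bound for discrete solutions
  obtain ⟨R0, hR0def⟩ : ∃ x : ℝ, x = ∑ k ∈ box Mx, |u0 k| := ⟨_, rfl⟩
  have hR0 : ∀ k, |u0 k| ≤ R0 := by
    intro k
    rw [hR0def]
    by_cases hk : k ∈ box Mx
    · exact Finset.single_le_sum (f := fun k => |u0 k|) (fun _ _ => abs_nonneg _) hk
    · have : u0 k = 0 := hu0 k (lt_of_not_ge (fun hc => hk (mem_box.2 hc)))
      rw [this]
      simp only [abs_zero]
      exact Finset.sum_nonneg (fun _ _ => abs_nonneg _)
  have hRu0 : ∀ Δt : ℝ, 0 < Δt → ∀ n k, |U Δt n k| ≤ R0 := by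
    intro Δt hΔt
    exact linf_bound q Δt hq hΔt w hw0 Mx hMx u0 (U Δt) (hU Δt hΔt) R0 hR0
  -- bound for v on [0, T+1]
  have hvb : ∀ k : ℤ, ∃ Ck : ℝ, ∀ t ∈ Set.Icc (0:ℝ) (T+1), |v k t| ≤ Ck := by
    intro k
    obtain ⟨C, hC⟩ := (isCompact_Icc (a := (0:ℝ)) (b := T+1)).exists_bound_of_continuousOn
      ((hv.1 k).mono (fun x hx => hx.1))
    exact ⟨C, fun t ht => by simpa [Real.norm_eq_abs] using hC t ht⟩
  choose Cv hCv using hvb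
  obtain ⟨Rv, hRvdef⟩ : ∃ x : ℝ, x = (box Mx).sup' hbox Cv := ⟨_, rfl⟩
  obtain ⟨R, hRdef⟩ : ∃ x : ℝ, x = max R0 (max Rv 0) := ⟨_, rfl⟩
  have hR : 0 ≤ R := by
    rw [hRdef]
    have : (0:ℝ) ≤ max Rv 0 := le_max_right _ _
    exact le_trans this (le_max_right _ _)
  have hRu : ∀ Δt : ℝ, 0 < Δt → ∀ n k, |U Δt n k| ≤ R :=
    fun Δt hΔt n k => le_trans (hRu0 Δt hΔt n k) (hRdef ▸ le_max_left _ _)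
  have hRv : ∀ k t, 0 ≤ t → t ≤ T+1 → |v k t| ≤ R := by
    intro k t ht htT
    by_cases hk : k ∈ box Mx
    · refine le_trans (hCv k t ⟨ht, htT⟩) ?_
      refine le_trans (hRvdef ▸ Finset.le_sup' Cv hk) ?_
      rw [hRdef]
      exact le_trans (le_max_left Rv 0) (le_max_right R0 _)
    · rw [hv.2.1 k (lt_of_not_ge (fun hc => hk (mem_box.2 hc))) t ht]
      simpa using hR
  -- constants
  obtain ⟨S, hSdef⟩ : ∃ x : ℝ, x = Swt w := ⟨_, rfl⟩
  have hS : 0 ≤ S := hSdef ▸ Swt_nonneg w hw0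
  obtain ⟨cardR, hcdef⟩ : ∃ x : ℝ, x = (((box Mx).card : ℕ) : ℝ) := ⟨_, rfl⟩
  have hcard : 0 ≤ cardR := hcdef ▸ Nat.cast_nonneg _
  obtain ⟨Cc, hCcdef⟩ : ∃ x : ℝ, x = 2 * S * cardR * (2*R)^2 + 8 * (2 * S * R) * R * cardR := ⟨_, rfl⟩
  have hCc : 0 ≤ Cc := by
    rw [hCcdef]
    have h1 : 0 ≤ 2 * S * cardR * (2*R)^2 :=
      mul_nonneg (mul_nonneg (by linarith) hcard) (sq_nonneg _)
    have h2 : 0 ≤ 8 * (2 * S * R) * R * cardR := by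
      have : 0 ≤ 2 * S * R := mul_nonneg (by linarith) hR
      exact mul_nonneg (mul_nonneg (by linarith) hR) hcard
    linarith
  obtain ⟨K, hKdef⟩ : ∃ x : ℝ, x = 2 * S * Cc * (T+1) := ⟨_, rfl⟩
  have hK : 0 ≤ K := by
    rw [hKdef]
    have : 0 ≤ 2 * S * Cc := mul_nonneg (by linarith) hCc
    exact mul_nonneg this (by linarith)
  -- modulus for φ⁻¹
  obtain ⟨η, hη0, hη⟩ := opow_inv_mod hr R (ε/2) hR (by linarith)
  -- time modulus for v i
  have hUC : UniformContinuousOn (v i) (Set.Icc (0:ℝ) (T+1)) :=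
    (isCompact_Icc).uniformContinuousOn_of_continuous
      ((hv.1 i).mono (fun x hx => hx.1))
  obtain ⟨δt, hδt0, hδt⟩ := (Metric.uniformContinuousOn_iff).1 hUC (ε/2) (by linarith)
  refine ⟨min 1 (min (δt/2) (η^2/(K+1))), by positivity, ?_⟩
  intro Δt hΔt hΔtδ t ht
  have hΔt1 : Δt ≤ 1 := le_of_lt (lt_of_lt_of_le hΔtδ (min_le_left _ _))
  have hΔt2 : Δt < δt := by
    have := lt_of_lt_of_le hΔtδ (le_trans (min_le_right _ _) (min_le_left _ _))
    linarith
  have hΔt3 : Δt < η^2/(K+1) :=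
    lt_of_lt_of_le hΔtδ (le_trans (min_le_right _ _) (min_le_right _ _))
  rcases le_or_gt t 0 with ht0 | ht0
  · -- t = 0
    have ht00 : t = 0 := le_antisymm ht0 ht.1
    have : interp Δt u0 (U Δt) i t = u0 i := by unfold interp; rw [if_pos ht0]
    rw [this, ht00, hv.2.2.1 i]
    simpa using le_of_lt hε
  · -- t > 0
    set m := (⌈t / Δt⌉).toNat with hmdef
    have hceilpos : 0 < ⌈t / Δt⌉ := Int.ceil_pos.2 (div_pos ht0 hΔt)
    have hmcast : ((m : ℕ) : ℝ) = ((⌈t / Δt⌉ : ℤ) : ℝ) := by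
      rw [hmdef]
      exact_mod_cast congrArg (fun z : ℤ => (z : ℝ)) (Int.toNat_of_nonneg (le_of_lt hceilpos))
    have hinterp : interp Δt u0 (U Δt) i t = U Δt m i := by
      unfold interp; rw [if_neg (not_le.2 ht0)]
    have htm1 : t ≤ (m : ℝ) * Δt := by
      rw [hmcast]
      have := Int.le_ceil (t / Δt)
      calc t = (t / Δt) * Δt := by field_simp
      _ ≤ (⌈t / Δt⌉ : ℝ) * Δt := mul_le_mul_of_nonneg_right this (le_of_lt hΔt)
    have htm2 : (m : ℝ) * Δt < t + Δt := by
      rw [hmcast]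
      have := Int.ceil_lt_add_one (t / Δt)
      calc (⌈t / Δt⌉ : ℝ) * Δt < (t / Δt + 1) * Δt := by
            exact mul_lt_mul_of_pos_right this hΔt
      _ = t + Δt := by field_simp
    have htmT : (m : ℝ) * Δt ≤ T + 1 := by
      have : t + Δt ≤ T + 1 := by
        have := ht.2; linarith
      linarith
    have htm0 : 0 ≤ (m : ℝ) * Δt := by positivity
    -- main estimate
    have hest := main_estimate q hq Mx hMx w hw0 hwsym hwsum u0 Δt hΔt
      (U Δt) (hU Δt hΔt) v hv (T+1) R hR (hRu Δt hΔt) hRv m htmT i hi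
    -- convert the bound
    have hest2 : (opow (U Δt m i) (q-1) - opow (v i ((m:ℝ) * Δt)) (q-1))^2 ≤ K * Δt := by
      refine hest.trans ?_
      have heq : 2 * Swt w * ((2 * Swt w * ((box Mx).card : ℝ) * (2*R)^2
          + 8 * (2 * Swt w * R) * R * ((box Mx).card : ℝ)) * (m:ℝ) * Δt ^ 2)
          = 2 * S * Cc * ((m:ℝ) * Δt) * Δt := by
        rw [hCcdef, hSdef, hcdef]
        push_cast
        ring
      rw [heq, hKdef]
      have h2SC : 0 ≤ 2 * S * Cc := mul_nonneg (by linarith) hCc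
      have := mul_le_mul_of_nonneg_left htmT h2SC
      nlinarith [le_of_lt hΔt]
    have hKΔt : K * Δt < η^2 := by
      have h1 : Δt * (K+1) < η^2 := (lt_div_iff₀ (by linarith : (0:ℝ) < K+1)).1 hΔt3
      nlinarith [hΔt]
    have habs : |opow (U Δt m i) (q-1) - opow (v i ((m:ℝ) * Δt)) (q-1)| ≤ η := by
      nlinarith [hest2, hKΔt, sq_abs (opow (U Δt m i) (q-1) - opow (v i ((m:ℝ) * Δt)) (q-1)),
        abs_nonneg (opow (U Δt m i) (q-1) - opow (v i ((m:ℝ) * Δt)) (q-1)), hη0]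
    have hspace : |U Δt m i - v i ((m:ℝ) * Δt)| ≤ ε/2 :=
      hη _ _ (hRu Δt hΔt m i) (hRv i _ htm0 htmT) habs
    have htime : |v i ((m:ℝ) * Δt) - v i t| ≤ ε/2 := by
      have hd := hδt ((m:ℝ) * Δt) ⟨htm0, htmT⟩ t ⟨ht.1, by linarith [ht.2]⟩ ?_
      · rw [Real.dist_eq] at hd
        exact le_of_lt hd
      · rw [Real.dist_eq]
        rw [abs_of_nonneg (by linarith)]
        linarith
    rw [hinterp]
    calc |U Δt m i - v i t|
        ≤ |U Δt m i - v i ((m:ℝ) * Δt)| + |v i ((m:ℝ) * Δt) - v i t| := by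
          have : U Δt m i - v i t
              = (U Δt m i - v i ((m:ℝ) * Δt)) + (v i ((m:ℝ) * Δt) - v i t) := by ring
          rw [this]
          exact abs_add_le _ _
    _ ≤ ε/2 + ε/2 := add_le_add hspace htime
    _ = ε := by ring
end
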